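/- arXiv:cs/0405020 — 9 statements merged into one kernel-verified Lean document; each statement's English description precedes it below -/
import Mathlib

section
/- Let A be a real symmetric n×n matrix, and let u, v be nonzero vectors in R^n with v orthogonal to both u and Au. Then the second largest eigenvalue λ₂ of A satisfies λ₂ ≥ min(R_A(u), R_A(v)), where R_A(w) = (Aw,w)/(w,w) is the Rayleigh quotient. -/
open Matrix

private lemma helper_sum_lt {n : ℕ} {μ : ℝ} (lam e : Fin n → ℝ)
    (h : ∀ k, e k ≠ 0 → lam k < μ) (he : 0 < ∑ k, e k ^ 2) :
    ∑ k, lam k * e k ^ 2 < μ * ∑ k, e k ^ 2 := by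
  rw [Finset.mul_sum]
  obtain ⟨k0, hk0⟩ : ∃ k, e k ≠ 0 := by
    by_contra hc; push_neg at hc; simp [hc] at he
  refine Finset.sum_lt_sum (fun k _ => ?_) ⟨k0, Finset.mem_univ k0, ?_⟩
  · by_cases hk : e k = 0
    · simp [hk]
    · exact mul_le_mul_of_nonneg_right (h k hk).le (sq_nonneg _)
  · exact mul_lt_mul_of_pos_right (h k0 hk0) (by positivity)

set_option maxHeartbeats 1000000 in
/-- Let `A` be a real symmetric `n × n` matrix, and let `u, v` be nonzero
vectors with `v` orthogonal to both `u` and `A u`.  Then the second largest eigenvalue of `A`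
is at least `min (R_A u) (R_A v)`, where `R_A w = ⟨A w, w⟩ / ⟨w, w⟩` is the Rayleigh quotient.
Here "the second largest eigenvalue is at least `μ`" is expressed by saying that two distinct
indices carry eigenvalues that are at least `μ`. -/
theorem stmt0 (n : ℕ) (A : Matrix (Fin n) (Fin n) ℝ) (hA : A.IsHermitian)
    (u v : Fin n → ℝ) (hu : u ≠ 0) (hv : v ≠ 0)
    (huv : v ⬝ᵥ u = 0) (hvAu : v ⬝ᵥ A.mulVec u = 0) :
    ∃ i j : Fin n, i ≠ j ∧
      min ((A.mulVec u ⬝ᵥ u) / (u ⬝ᵥ u)) ((A.mulVec v ⬝ᵥ v) / (v ⬝ᵥ v)) ≤ hA.eigenvalues i ∧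
      min ((A.mulVec u ⬝ᵥ u) / (u ⬝ᵥ u)) ((A.mulVec v ⬝ᵥ v) / (v ⬝ᵥ v)) ≤ hA.eigenvalues j := by
  by_contra hcon
  push_neg at hcon
  set μ := min ((A.mulVec u ⬝ᵥ u) / (u ⬝ᵥ u)) ((A.mulVec v ⬝ᵥ v) / (v ⬝ᵥ v)) with hμ
  set lam := hA.eigenvalues with hlam
  set U : Matrix (Fin n) (Fin n) ℝ := (hA.eigenvectorUnitary : Matrix (Fin n) (Fin n) ℝ) with hUdef
  have hUU : U * star U = 1 := Matrix.mem_unitaryGroup_iff.mp hA.eigenvectorUnitary.2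
  have hspec : A = U * diagonal lam * star U := by
    have := hA.spectral_theorem
    simpa using this
  set c := (star U) *ᵥ u with hc
  set d := (star U) *ᵥ v with hd
  -- inner products preserved
  have key : ∀ x y : Fin n → ℝ, ((star U) *ᵥ x) ⬝ᵥ ((star U) *ᵥ y) = x ⬝ᵥ y := by
    intro x y
    have hstar : star U = Uᵀ := by
      ext i j; simp [Matrix.star_apply]
    rw [hstar, Matrix.mulVec_transpose, ← Matrix.dotProduct_mulVec, Matrix.mulVec_mulVec]
    have : U * Uᵀ = 1 := by rw [← hstar]; exact hUU
    rw [this, Matrix.one_mulVec]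
  -- quadratic form expansion
  have keyA : ∀ x y : Fin n → ℝ,
      (A *ᵥ x) ⬝ᵥ y = ∑ k, lam k * (((star U) *ᵥ x) k * ((star U) *ᵥ y) k) := by
    intro x y
    have hstar : star U = Uᵀ := by
      ext i j; simp [Matrix.star_apply]
    have flip : ∀ z w : Fin n → ℝ, (U *ᵥ z) ⬝ᵥ w = z ⬝ᵥ ((star U) *ᵥ w) := by
      intro z w
      rw [hstar, Matrix.mulVec_transpose, dotProduct_comm z, ← Matrix.dotProduct_mulVec]
      exact dotProduct_comm _ _
    conv_lhs => rw [hspec]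
    rw [← Matrix.mulVec_mulVec, ← Matrix.mulVec_mulVec, flip]
    simp [Matrix.mulVec_diagonal, dotProduct, mul_assoc]
  have hcc : ∑ k, c k ^ 2 = u ⬝ᵥ u := by
    rw [← key u u]; simp [hc, dotProduct, sq]
  have hdd : ∑ k, d k ^ 2 = v ⬝ᵥ v := by
    rw [← key v v]; simp [hd, dotProduct, sq]
  have hcd : ∑ k, c k * d k = 0 := by
    have h2 : ((star U) *ᵥ v) ⬝ᵥ ((star U) *ᵥ u) = 0 := by rw [key]; exact huv
    rw [← h2]; simp [hc, hd, dotProduct, mul_comm]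
  have hAcc : ∑ k, lam k * c k ^ 2 = (A *ᵥ u) ⬝ᵥ u := by
    rw [keyA u u]; simp [hc, sq]
  have hAdd : ∑ k, lam k * d k ^ 2 = (A *ᵥ v) ⬝ᵥ v := by
    rw [keyA v v]; simp [hd, sq]
  have hAcd : ∑ k, lam k * (c k * d k) = 0 := by
    rw [← keyA u v]
    rw [dotProduct_comm]
    exact hvAu
  -- positivity
  have hSu : 0 < ∑ k, c k ^ 2 := by
    rw [hcc]
    have h0 : u ⬝ᵥ u ≠ 0 := fun h => hu (dotProduct_self_eq_zero.mp h)
    exact (Finset.sum_nonneg fun i _ => mul_self_nonneg _ : (0:ℝ) ≤ u ⬝ᵥ u).lt_of_ne (Ne.symm h0)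
  have hSv : 0 < ∑ k, d k ^ 2 := by
    rw [hdd]
    have h0 : v ⬝ᵥ v ≠ 0 := fun h => hv (dotProduct_self_eq_zero.mp h)
    exact (Finset.sum_nonneg fun i _ => mul_self_nonneg _ : (0:ℝ) ≤ v ⬝ᵥ v).lt_of_ne (Ne.symm h0)
  -- Rayleigh bounds
  have hRu : μ * ∑ k, c k ^ 2 ≤ ∑ k, lam k * c k ^ 2 := by
    have h1 : μ ≤ (A *ᵥ u ⬝ᵥ u) / (u ⬝ᵥ u) := min_le_left _ _
    rw [le_div_iff₀ (hcc ▸ hSu)] at h1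
    rw [hAcc, hcc]; exact h1
  have hRv : μ * ∑ k, d k ^ 2 ≤ ∑ k, lam k * d k ^ 2 := by
    have h1 : μ ≤ (A *ᵥ v ⬝ᵥ v) / (v ⬝ᵥ v) := min_le_right _ _
    rw [le_div_iff₀ (hdd ▸ hSv)] at h1
    rw [hAdd, hdd]; exact h1
  clear hc hd hspec hUU hUdef hμ hlam huv hvAu hcc hdd hAcc hAdd
  clear_value lam c d μ
  by_cases hex : ∃ i0, μ ≤ lam i0
  · obtain ⟨i0, hi0⟩ := hex
    have hsmall : ∀ j, j ≠ i0 → lam j < μ := fun j hj => hcon i0 j (Ne.symm hj) hi0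
    by_cases hci0 : c i0 = 0
    · have := helper_sum_lt lam c
        (fun k hk => hsmall k (by rintro rfl; exact hk hci0)) hSu
      linarith
    · set e : Fin n → ℝ := fun k => d i0 * c k - c i0 * d k with he
      have hei0 : e i0 = 0 := by simp only [he]; ring
      have hesum : ∑ k, e k ^ 2
          = d i0 ^ 2 * ∑ k, c k ^ 2 + c i0 ^ 2 * ∑ k, d k ^ 2 := by
        have : ∀ k, e k ^ 2 = d i0 ^ 2 * c k ^ 2 + c i0 ^ 2 * d k ^ 2
            - (2 * c i0 * d i0) * (c k * d k) := fun k => by simp only [he]; ring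
        rw [Finset.sum_congr rfl fun k _ => this k]
        rw [Finset.sum_sub_distrib, Finset.sum_add_distrib, ← Finset.mul_sum,
          ← Finset.mul_sum, ← Finset.mul_sum, hcd]
        ring
      have heAsum : ∑ k, lam k * e k ^ 2
          = d i0 ^ 2 * ∑ k, lam k * c k ^ 2 + c i0 ^ 2 * ∑ k, lam k * d k ^ 2 := by
        have : ∀ k, lam k * e k ^ 2 = d i0 ^ 2 * (lam k * c k ^ 2)
            + c i0 ^ 2 * (lam k * d k ^ 2)
            - (2 * c i0 * d i0) * (lam k * (c k * d k)) := fun k => by simp only [he]; ring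
        rw [Finset.sum_congr rfl fun k _ => this k]
        rw [Finset.sum_sub_distrib, Finset.sum_add_distrib, ← Finset.mul_sum,
          ← Finset.mul_sum, ← Finset.mul_sum, hAcd]
        ring
      have hepos : 0 < ∑ k, e k ^ 2 := by
        rw [hesum]
        have h1 : 0 < c i0 ^ 2 * ∑ k, d k ^ 2 := by positivity
        nlinarith [sq_nonneg (d i0), hSu.le]
      have hge : μ * ∑ k, e k ^ 2 ≤ ∑ k, lam k * e k ^ 2 := by
        rw [hesum, heAsum]
        have h1 := mul_le_mul_of_nonneg_left hRu (sq_nonneg (d i0))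
        have h2 := mul_le_mul_of_nonneg_left hRv (sq_nonneg (c i0))
        nlinarith [h1, h2]
      have := helper_sum_lt lam e
        (fun k hk => hsmall k (by rintro rfl; exact hk hei0)) hepos
      linarith
  · push_neg at hex
    have := helper_sum_lt lam c (fun k _ => hex k) hSu
    linarith
end

section
/- The adjacency operator A_T of the infinite d-regular tree, acting on ℓ²(vertices), has operator norm at most 2√(d-1). -/
open SimpleGraph Finset

namespace Stmt1Aux

variable {V : Type*} [DecidableEq V] {G : SimpleGraph V}

lemma concat_isPath {r v w : V} {q : G.Walk r v} (hq : q.IsPath) (h : G.Adj v w)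
    (hw : w ∉ q.support) : (q.concat h).IsPath := by
  rw [← SimpleGraph.Walk.isPath_reverse_iff, SimpleGraph.Walk.reverse_concat]
  exact SimpleGraph.Walk.IsPath.cons hq.reverse
    (by simpa [SimpleGraph.Walk.support_reverse] using hw)

lemma tri (hacyc : G.IsAcyclic) {r : V} (p : ∀ x : V, G.Walk r x)
    (hp : ∀ x, (p x).IsPath) {v w : V} (h : G.Adj v w) :
    ((p v).length = (p w).length + 1 ∧ p v = (p w).concat h.symm) ∨
    ((p w).length = (p v).length + 1 ∧ p w = (p v).concat h) := by
  have uniq : ∀ {x : V} (q : G.Walk r x), q.IsPath → q = p x := by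
    intro x q hq
    exact congrArg Subtype.val (hacyc.path_unique ⟨q, hq⟩ ⟨p x, hp x⟩)
  by_cases hv : v ∈ (p w).support
  · by_cases hw : w ∈ (p v).support
    · exfalso
      have h1 : (p w).takeUntil v hv = p v := uniq _ ((hp w).takeUntil hv)
      have h2 : (p v).takeUntil w hw = p w := uniq _ ((hp v).takeUntil hw)
      have e1 := congrArg SimpleGraph.Walk.length ((p w).take_spec hv)
      rw [SimpleGraph.Walk.length_append, h1] at e1
      have e2 := congrArg SimpleGraph.Walk.length ((p v).take_spec hw)
      rw [SimpleGraph.Walk.length_append, h2] at e2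
      have hz : ((p w).dropUntil v hv).length = 0 := by omega
      exact h.ne (SimpleGraph.Walk.eq_of_length_eq_zero hz)
    · right
      have e := uniq ((p v).concat h) (concat_isPath (hp v) h hw)
      refine ⟨?_, e.symm⟩
      rw [← e, SimpleGraph.Walk.length_concat]
  · left
    have e := uniq ((p w).concat h.symm) (concat_isPath (hp w) h.symm hv)
    refine ⟨?_, e.symm⟩
    rw [← e, SimpleGraph.Walk.length_concat]

lemma weight_sum {α : Type*} [DecidableEq α] (s : ℝ) (hs : 1 ≤ s) (d : ℕ) (hd : 2 ≤ d)
    (hss : s * s = (d : ℝ) - 1) (N : Finset α) (hN : N.card = d) (cond : α → Prop)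
    [DecidablePred cond] (h1 : (N.filter cond).card ≤ 1) :
    ∑ x ∈ N, (if cond x then s else 1 / s) ≤ 2 * s := by
  have hs0 : 0 < s := lt_of_lt_of_le one_pos hs
  rw [Finset.sum_ite, Finset.sum_const, Finset.sum_const]
  set k := (N.filter cond).card with hk
  set m := (N.filter (fun x => ¬ cond x)).card with hm
  have hkm : k + m = d := by
    rw [← hN, hk, hm]; exact Finset.card_filter_add_card_filter_not _
  rw [nsmul_eq_mul, nsmul_eq_mul]
  interval_cases k
  · -- k = 0, m = d
    have hmd : m = d := by omega
    rw [hmd]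
    have : (d : ℝ) * (1 / s) = d / s := by ring
    rw [Nat.cast_zero, zero_mul, zero_add, this, div_le_iff₀ hs0]
    have hd' : (2 : ℝ) ≤ (d : ℝ) := by exact_mod_cast hd
    nlinarith [hss]
  · -- k = 1, m = d - 1
    have hmd : (m : ℝ) = (d : ℝ) - 1 := by
      have : m = d - 1 := by omega
      rw [this, Nat.cast_sub (by omega)]; norm_num
    rw [hmd, ← hss]
    have : s * s * (1 / s) = s := by field_simp
    rw [this]
    push_cast
    linarith

end Stmt1Aux

/-- The adjacency operator `A_T` of the infinite `d`-regular tree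
(a connected, acyclic, `d`-regular simple graph), acting on `ℓ²` of the vertices, has
operator norm at most `2√(d-1)`.  Since the finitely supported functions are dense in `ℓ²`,
this is expressed as the bound `‖A_T f‖² ≤ (2√(d-1))² ‖f‖²` for every finitely supported
`f : V →₀ ℝ`. -/
theorem stmt1 {V : Type*} [DecidableEq V] (G : SimpleGraph V) [G.LocallyFinite]
    (d : ℕ) (hd : 2 ≤ d) (hreg : G.IsRegularOfDegree d)
    (hconn : G.Connected) (hacyc : G.IsAcyclic) (f : V →₀ ℝ) :
    ∑' v : V, (∑ w ∈ G.neighborFinset v, f w) ^ 2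
      ≤ (2 * Real.sqrt ((d : ℝ) - 1)) ^ 2 * ∑ v ∈ f.support, (f v) ^ 2 := by
  classical
  obtain ⟨r⟩ := hconn.nonempty
  set p : ∀ x : V, G.Walk r x := fun x => ((hconn.preconnected r x).some.toPath : G.Walk r x)
    with hpdef
  have hp : ∀ x, (p x).IsPath := fun x => ((hconn.preconnected r x).some.toPath).2
  set s : ℝ := Real.sqrt ((d : ℝ) - 1) with hsdef
  have hd1 : (1 : ℝ) ≤ (d : ℝ) - 1 := by
    have : (2 : ℝ) ≤ (d : ℝ) := by exact_mod_cast hd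
    linarith
  have hs1 : 1 ≤ s := by
    have := Real.sqrt_le_sqrt hd1
    rwa [Real.sqrt_one] at this
  have hs0 : 0 < s := lt_of_lt_of_le one_pos hs1
  have hss : s * s = (d : ℝ) - 1 := Real.mul_self_sqrt (by linarith)
  -- the weight function
  set a : V → V → ℝ := fun v w => if (p w).length < (p v).length then s else 1 / s with ha
  have hapos : ∀ v w, 0 < a v w := by
    intro v w
    rw [ha]
    dsimp only
    split
    · exact hs0
    · positivity
  -- at most one "lower" neighbor
  have hlow : ∀ v : V, ((G.neighborFinset v).filter (fun w => (p w).length < (p v).length)).card ≤ 1 := by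
    intro v
    rw [Finset.card_le_one]
    intro w1 hw1 w2 hw2
    rw [Finset.mem_filter, SimpleGraph.mem_neighborFinset] at hw1 hw2
    obtain ⟨h1, hd1'⟩ := hw1
    obtain ⟨h2, hd2'⟩ := hw2
    rcases Stmt1Aux.tri hacyc p hp h1 with ⟨hl, he⟩ | ⟨hl, _⟩
    · rcases Stmt1Aux.tri hacyc p hp h2 with ⟨hl2, he2⟩ | ⟨hl2, _⟩
      · have := he.symm.trans he2
        obtain ⟨hv, -⟩ := SimpleGraph.Walk.concat_inj this
        exact hv
      · omega
    · omega
  -- at most one "non-higher" neighbor from the other side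
  have hup : ∀ w : V, ((G.neighborFinset w).filter (fun v => ¬ (p w).length < (p v).length)).card ≤ 1 := by
    intro w
    rw [Finset.card_le_one]
    intro v1 hv1 v2 hv2
    rw [Finset.mem_filter, SimpleGraph.mem_neighborFinset] at hv1 hv2
    obtain ⟨h1, hd1'⟩ := hv1
    obtain ⟨h2, hd2'⟩ := hv2
    rcases Stmt1Aux.tri hacyc p hp h1.symm with ⟨hl, _⟩ | ⟨hl, he⟩
    · omega
    · rcases Stmt1Aux.tri hacyc p hp h2.symm with ⟨hl2, _⟩ | ⟨hl2, he2⟩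
      · omega
      · have := he.symm.trans he2
        obtain ⟨hv, -⟩ := SimpleGraph.Walk.concat_inj this
        exact hv
  -- weight sums
  have hwv : ∀ v : V, ∑ w ∈ G.neighborFinset v, a v w ≤ 2 * s := by
    intro v
    have := Stmt1Aux.weight_sum s hs1 d hd hss (G.neighborFinset v) (hreg v)
      (fun w => (p w).length < (p v).length) (hlow v)
    simpa [ha] using this
  have hwu : ∀ w : V, ∑ v ∈ G.neighborFinset w, 1 / a v w ≤ 2 * s := by
    intro w
    have key : ∀ v : V, 1 / a v w = if ¬ (p w).length < (p v).length then s else 1 / s := by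
      intro v
      rw [ha]
      dsimp only
      by_cases hc : (p w).length < (p v).length <;> simp [hc, one_div_one_div]
    calc ∑ v ∈ G.neighborFinset w, 1 / a v w
        = ∑ v ∈ G.neighborFinset w, (if ¬ (p w).length < (p v).length then s else 1 / s) := by
          exact Finset.sum_congr rfl fun v _ => key v
      _ ≤ 2 * s := Stmt1Aux.weight_sum s hs1 d hd hss (G.neighborFinset w) (hreg w)
          (fun v => ¬ (p w).length < (p v).length) (hup w)
  -- the finite set where the LHS summand can be nonzero
  set S : Finset V := f.support.biUnion (fun w => G.neighborFinset w) with hS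
  have hNsub : ∀ w ∈ f.support, G.neighborFinset w ⊆ S := by
    intro w hw v hv
    exact Finset.mem_biUnion.2 ⟨w, hw, hv⟩
  have hzero : ∀ v : V, v ∉ S → (∑ w ∈ G.neighborFinset v, f w) ^ 2 = 0 := by
    intro v hv
    have : ∀ w ∈ G.neighborFinset v, f w = 0 := by
      intro w hw
      by_contra hne
      have hw' : w ∈ f.support := Finsupp.mem_support_iff.2 hne
      have : v ∈ G.neighborFinset w := by
        rw [SimpleGraph.mem_neighborFinset] at hw ⊢
        exact hw.symm
      exact hv (Finset.mem_biUnion.2 ⟨w, hw', this⟩)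
    rw [Finset.sum_eq_zero this]
    norm_num
  rw [tsum_eq_sum (s := S) (fun v hv => hzero v hv)]
  -- Cauchy-Schwarz at each vertex
  have hCS : ∀ v : V, (∑ w ∈ G.neighborFinset v, f w) ^ 2
      ≤ (∑ w ∈ G.neighborFinset v, a v w) * (∑ w ∈ G.neighborFinset v, f w ^ 2 / a v w) := by
    intro v
    have := Finset.sum_mul_sq_le_sq_mul_sq (G.neighborFinset v)
      (fun w => Real.sqrt (a v w)) (fun w => f w / Real.sqrt (a v w))
    have e1 : ∀ w ∈ G.neighborFinset v,
        Real.sqrt (a v w) * (f w / Real.sqrt (a v w)) = f w := by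
      intro w _
      have : Real.sqrt (a v w) ≠ 0 := ne_of_gt (Real.sqrt_pos.2 (hapos v w))
      field_simp
    have e2 : ∀ w ∈ G.neighborFinset v, Real.sqrt (a v w) ^ 2 = a v w := by
      intro w _
      exact Real.sq_sqrt (le_of_lt (hapos v w))
    have e3 : ∀ w ∈ G.neighborFinset v,
        (f w / Real.sqrt (a v w)) ^ 2 = f w ^ 2 / a v w := by
      intro w hw
      rw [div_pow, e2 w hw]
    rw [Finset.sum_congr rfl e1, Finset.sum_congr rfl e2, Finset.sum_congr rfl e3] at this
    exact this
  have hinner_nonneg : ∀ v : V, 0 ≤ ∑ w ∈ G.neighborFinset v, f w ^ 2 / a v w := by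
    intro v
    refine Finset.sum_nonneg fun w _ => ?_
    exact div_nonneg (sq_nonneg _) (le_of_lt (hapos v w))
  -- swap the double sum
  have hswap : ∑ v ∈ S, ∑ w ∈ G.neighborFinset v, f w ^ 2 / a v w
      = ∑ w ∈ f.support, ∑ v ∈ G.neighborFinset w, f w ^ 2 / a v w := by
    have step1 : ∀ v : V, ∑ w ∈ G.neighborFinset v, f w ^ 2 / a v w
        = ∑ w ∈ f.support, (if v ∈ G.neighborFinset w then f w ^ 2 / a v w else 0) := by
      intro v
      have memiff : ∀ w : V, v ∈ G.neighborFinset w ↔ w ∈ G.neighborFinset v := by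
        intro w
        rw [SimpleGraph.mem_neighborFinset, SimpleGraph.mem_neighborFinset]
        exact ⟨fun h => h.symm, fun h => h.symm⟩
      rw [show (∑ w ∈ f.support, (if v ∈ G.neighborFinset w then f w ^ 2 / a v w else 0))
          = ∑ w ∈ f.support, (if w ∈ G.neighborFinset v then f w ^ 2 / a v w else 0) from
          Finset.sum_congr rfl fun w _ => by simp only [memiff w]]
      rw [Finset.sum_ite_mem]
      refine (Finset.sum_subset (Finset.inter_subset_right) ?_).symm
      intro w hw hwn
      have : f w = 0 := by
        by_contra hne
        exact hwn (Finset.mem_inter.2 ⟨Finsupp.mem_support_iff.2 hne, hw⟩)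
      rw [this]
      norm_num
    calc ∑ v ∈ S, ∑ w ∈ G.neighborFinset v, f w ^ 2 / a v w
        = ∑ v ∈ S, ∑ w ∈ f.support, (if v ∈ G.neighborFinset w then f w ^ 2 / a v w else 0) :=
          Finset.sum_congr rfl fun v _ => step1 v
      _ = ∑ w ∈ f.support, ∑ v ∈ S, (if v ∈ G.neighborFinset w then f w ^ 2 / a v w else 0) :=
          Finset.sum_comm
      _ = ∑ w ∈ f.support, ∑ v ∈ G.neighborFinset w, f w ^ 2 / a v w := by
          refine Finset.sum_congr rfl fun w hw => ?_
          rw [Finset.sum_ite_mem, Finset.inter_eq_right.2 (hNsub w hw)]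
  -- put it all together
  calc ∑ v ∈ S, (∑ w ∈ G.neighborFinset v, f w) ^ 2
      ≤ ∑ v ∈ S, (2 * s) * (∑ w ∈ G.neighborFinset v, f w ^ 2 / a v w) := by
        refine Finset.sum_le_sum fun v _ => ?_
        refine le_trans (hCS v) ?_
        exact mul_le_mul_of_nonneg_right (hwv v) (hinner_nonneg v)
    _ = (2 * s) * ∑ v ∈ S, ∑ w ∈ G.neighborFinset v, f w ^ 2 / a v w := by
        rw [Finset.mul_sum]
    _ = (2 * s) * ∑ w ∈ f.support, ∑ v ∈ G.neighborFinset w, f w ^ 2 / a v w := by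
        rw [hswap]
    _ ≤ (2 * s) * ∑ w ∈ f.support, f w ^ 2 * (2 * s) := by
        refine mul_le_mul_of_nonneg_left ?_ (by linarith)
        refine Finset.sum_le_sum fun w _ => ?_
        have : ∑ v ∈ G.neighborFinset w, f w ^ 2 / a v w
            = f w ^ 2 * ∑ v ∈ G.neighborFinset w, 1 / a v w := by
          rw [Finset.mul_sum]
          refine Finset.sum_congr rfl fun v _ => ?_
          field_simp
        rw [this]
        exact mul_le_mul_of_nonneg_left (hwu w) (sq_nonneg _)
    _ = (2 * s) ^ 2 * ∑ v ∈ f.support, f v ^ 2 := by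
        rw [← Finset.sum_mul]
        ring
end

section
/- For even k and 0 < i ≤ k, the number N_{k,i} of words of length k over a free generating set and its inverses that reduce to a given fixed irreducible word of length i satisfies N_{k,i} ≤ (2√(d-1))^k (d-1)^{-i/2} √((d-1)/d), and N_{k,0} ≤ (2√(d-1))^k, where d is the alphabet size (number of generators and their inverses). -/
open FreeGroup

namespace Stmt2Aux

variable {m : ℕ}

/-- The set of words of length `k` reducing to `x`. -/
abbrev S (m k : ℕ) (x : FreeGroup (Fin m)) : Type :=
  {w : List (Fin m × Bool) // w.length = k ∧ FreeGroup.mk w = x}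

noncomputable instance (m k : ℕ) (x : FreeGroup (Fin m)) : Fintype (S m k x) := by
  classical
  apply Fintype.ofInjective
    (fun w (j : Fin k) => w.1.get (Fin.cast w.2.1.symm j))
  intro a b h
  apply Subtype.ext
  apply List.ext_get (by rw [a.2.1, b.2.1])
  intro n h1 h2
  have := congrFun h ⟨n, by omega⟩
  simpa [List.get_eq_getElem] using this

lemma length_eq (w : List (Fin m × Bool)) (x : FreeGroup (Fin m)) (h : FreeGroup.mk w = x) :
    ∃ n, w.length = x.toWord.length + 2 * n := by
  have h1 : x.toWord = FreeGroup.reduce w := by rw [← h, FreeGroup.toWord_mk]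
  obtain ⟨n, hn⟩ := FreeGroup.Red.length (FreeGroup.reduce.red (L := w))
  exact ⟨n, by rw [h1]; exact hn⟩

lemma card_zero_of_no (k : ℕ) (x : FreeGroup (Fin m))
    (h : ¬ ∃ n, k = x.toWord.length + 2 * n) : Fintype.card (S m k x) = 0 := by
  rw [Fintype.card_eq_zero_iff]
  constructor
  intro w
  obtain ⟨n, hn⟩ := length_eq w.1 x w.2.2
  exact h ⟨n, by rw [← w.2.1]; exact hn⟩

lemma toWord_single_mul (u : Fin m × Bool) (x : FreeGroup (Fin m)) :
    (FreeGroup.mk [u] * x).toWord =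
      (List.casesOn x.toWord [u] fun hd tl =>
        if u.1 = hd.1 ∧ u.2 = !hd.2 then tl else u :: hd :: tl) := by
  conv_lhs => rw [← FreeGroup.mk_toWord (x := x)]
  rw [FreeGroup.mul_mk, FreeGroup.toWord_mk, List.singleton_append, FreeGroup.reduce.cons,
    FreeGroup.reduce_toWord]

lemma toWord_nil_case (a : Fin m × Bool) (x : FreeGroup (Fin m)) (h : x.toWord = []) :
    (FreeGroup.mk [(a.1, !a.2)] * x).toWord = [(a.1, !a.2)] := by
  rw [toWord_single_mul, h]

lemma toWord_cancel_case (a : Fin m × Bool) (x : FreeGroup (Fin m)) (tl : List (Fin m × Bool))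
    (h : x.toWord = a :: tl) :
    (FreeGroup.mk [(a.1, !a.2)] * x).toWord = tl := by
  rw [toWord_single_mul, h]
  simp

lemma toWord_push_case (a c : Fin m × Bool) (x : FreeGroup (Fin m)) (tl : List (Fin m × Bool))
    (h : x.toWord = c :: tl) (hne : a ≠ c) :
    (FreeGroup.mk [(a.1, !a.2)] * x).toWord = (a.1, !a.2) :: c :: tl := by
  rw [toWord_single_mul, h]
  have : ¬((a.1, !a.2).1 = c.1 ∧ (a.1, !a.2).2 = !c.2) := by
    rintro ⟨h1, h2⟩
    exact hne (Prod.ext h1 (by simpa using h2))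
  simp only [this, if_false]

lemma mk_cancel (a : Fin m × Bool) (t : List (Fin m × Bool)) :
    FreeGroup.mk ((a.1, !a.2) :: (a.1, a.2) :: t) = FreeGroup.mk t :=
  Quot.sound FreeGroup.Red.Step.cons_not_rev

lemma mk_cancel' (a : Fin m × Bool) (t : List (Fin m × Bool)) :
    FreeGroup.mk ((a.1, a.2) :: (a.1, !a.2) :: t) = FreeGroup.mk t :=
  Quot.sound FreeGroup.Red.Step.cons_not

/-- Peeling off the first letter. -/
def consEquiv (k : ℕ) (x : FreeGroup (Fin m)) :
    S m (k+1) x ≃ Σ a : Fin m × Bool, S m k (FreeGroup.mk [(a.1, !a.2)] * x) where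
  toFun w :=
    match w with
    | ⟨[], hw⟩ => absurd hw.1 (by simp)
    | ⟨a :: t, hw⟩ => ⟨a, t, by simpa using hw.1, by
        rw [← hw.2, FreeGroup.mul_mk]
        have e : ([(a.1, !a.2)] ++ a :: t) = ((a.1, !a.2) :: (a.1, a.2) :: t) := by simp
        rw [e, mk_cancel]⟩
  invFun s :=
    match s with
    | ⟨a, t, h1, h2⟩ => ⟨a :: t, by simp [h1], by
        have e0 : FreeGroup.mk (a :: t) = FreeGroup.mk [a] * FreeGroup.mk t := by
          rw [FreeGroup.mul_mk]; rfl
        rw [e0, h2, ← mul_assoc, FreeGroup.mul_mk]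
        have e : ([a] ++ [(a.1, !a.2)]) = ((a.1, a.2) :: (a.1, !a.2) :: ([] : List (Fin m × Bool))) := by
          simp
        rw [e, mk_cancel', ← FreeGroup.one_eq_mk, one_mul]⟩
  left_inv w := by
    match w with
    | ⟨[], hw⟩ => exact absurd hw.1 (by simp)
    | ⟨a :: t, hw⟩ => rfl
  right_inv s := by
    rcases s with ⟨a, t, h1, h2⟩
    rfl

lemma card_succ (k : ℕ) (x : FreeGroup (Fin m)) :
    Fintype.card (S m (k+1) x)
      = ∑ a : Fin m × Bool, Fintype.card (S m k (FreeGroup.mk [(a.1, !a.2)] * x)) := by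
  rw [Fintype.card_congr (consEquiv k x), Fintype.card_sigma]

lemma main_bound (hm : 1 ≤ m) :
    ∀ (k : ℕ) (x : FreeGroup (Fin m)),
      Fintype.card (S m k x)
        ≤ k.choose ((k + x.toWord.length) / 2) * (2 * m - 1) ^ ((k - x.toWord.length) / 2) := by
  intro k
  induction k with
  | zero =>
    intro x
    by_cases hx : x = 1
    · subst hx
      have h0 : (1 : FreeGroup (Fin m)).toWord.length = 0 := by
        rw [FreeGroup.toWord_one]; rfl
      rw [h0]
      have hle : Fintype.card (S m 0 (1 : FreeGroup (Fin m))) ≤ 1 := by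
        apply Fintype.card_le_one_iff.mpr
        rintro ⟨wa, ha⟩ ⟨wb, hb⟩
        apply Subtype.ext
        show wa = wb
        rw [List.length_eq_zero_iff.mp ha.1, List.length_eq_zero_iff.mp hb.1]
      simpa using hle
    · have h0 : Fintype.card (S m 0 x) = 0 := by
        rw [Fintype.card_eq_zero_iff]
        exact ⟨fun w => hx (by
          rw [← w.2.2, List.length_eq_zero_iff.mp w.2.1, ← FreeGroup.one_eq_mk])⟩
      rw [h0]; exact Nat.zero_le _
  | succ k ih =>
    intro x
    by_cases hpar : ∃ n, k + 1 = x.toWord.length + 2 * n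
    swap
    · rw [card_zero_of_no _ _ hpar]; exact Nat.zero_le _
    obtain ⟨u, hu⟩ := hpar
    rw [card_succ]
    rcases hxw : x.toWord with _ | ⟨c, tl⟩
    · -- x = 1 : all d = 2m letters lead to a word of length 1
      have hi : x.toWord.length = 0 := by rw [hxw]; rfl
      simp only [List.length_nil]
      rw [hi] at hu
      obtain ⟨v, hv⟩ : ∃ v, k = 2 * v + 1 := ⟨u - 1, by omega⟩
      subst hv
      have hb : ∀ a : Fin m × Bool,
          Fintype.card (S m (2 * v + 1) (FreeGroup.mk [(a.1, !a.2)] * x))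
            ≤ (2 * v + 1).choose (v + 1) * (2 * m - 1) ^ v := by
        intro a
        have h1 : (FreeGroup.mk [(a.1, !a.2)] * x).toWord.length = 1 := by
          rw [toWord_nil_case a x hxw]; rfl
        have := ih (FreeGroup.mk [(a.1, !a.2)] * x)
        rw [h1] at this
        have e1 : (2 * v + 1 + 1) / 2 = v + 1 := by omega
        have e2 : (2 * v + 1 - 1) / 2 = v := by omega
        rwa [e1, e2] at this
      calc
        ∑ a : Fin m × Bool,
            Fintype.card (S m (2 * v + 1) (FreeGroup.mk [(a.1, !a.2)] * x))
            ≤ ∑ _a : Fin m × Bool, (2 * v + 1).choose (v + 1) * (2 * m - 1) ^ v :=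
          Finset.sum_le_sum fun a _ => hb a
        _ = 2 * m * ((2 * v + 1).choose (v + 1) * (2 * m - 1) ^ v) := by
          rw [Finset.sum_const, Finset.card_univ, Fintype.card_prod, Fintype.card_fin,
            Fintype.card_bool, smul_eq_mul, mul_comm m 2]
        _ ≤ 2 * (2 * m - 1) * ((2 * v + 1).choose (v + 1) * (2 * m - 1) ^ v) := by
          apply Nat.mul_le_mul_right
          omega
        _ = (2 * (2 * v + 1).choose (v + 1)) * (2 * m - 1) ^ (v + 1) := by ring
        _ = (2 * v + 1 + 1).choose ((2 * v + 1 + 1 + 0) / 2) * (2 * m - 1) ^ ((2 * v + 1 + 1 - 0) / 2) := by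
          have e1 : (2 * v + 1 + 1 + 0) / 2 = v + 1 := by omega
          have e2 : (2 * v + 1 + 1 - 0) / 2 = v + 1 := by omega
          have e3 : (2 * v + 1) - (v + 1) = v := by omega
          have e4 := Nat.choose_symm (show v + 1 ≤ 2 * v + 1 by omega)
          rw [e3] at e4
          have e5 : (2 * v + 1 + 1).choose (v + 1) = 2 * (2 * v + 1).choose (v + 1) := by
            rw [Nat.choose_succ_succ, e4]
            simp only [Nat.succ_eq_add_one]
            omega
          rw [e1, e2, e5]
    · -- x ≠ 1, first reduced letter c
      have hi : x.toWord.length = tl.length + 1 := by rw [hxw]; rfl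
      simp only [List.length_cons]
      rw [hi] at hu
      obtain ⟨L, hL⟩ : ∃ L, tl.length = L := ⟨_, rfl⟩
      rw [hL] at hu ⊢
      have hc : Fintype.card (S m k (FreeGroup.mk [(c.1, !c.2)] * x))
          ≤ k.choose ((k + L) / 2) * (2 * m - 1) ^ ((k - L) / 2) := by
        have h1 : (FreeGroup.mk [(c.1, !c.2)] * x).toWord.length = L := by
          rw [toWord_cancel_case c x tl hxw, hL]
        have := ih (FreeGroup.mk [(c.1, !c.2)] * x)
        rwa [h1] at this
      have hp : ∀ a : Fin m × Bool, a ≠ c →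
          Fintype.card (S m k (FreeGroup.mk [(a.1, !a.2)] * x))
            ≤ k.choose ((k + (L + 2)) / 2) * (2 * m - 1) ^ ((k - (L + 2)) / 2) := by
        intro a ha
        have h1 : (FreeGroup.mk [(a.1, !a.2)] * x).toWord.length = L + 2 := by
          rw [toWord_push_case a c x tl hxw ha]
          simp [hL]
        have := ih (FreeGroup.mk [(a.1, !a.2)] * x)
        rwa [h1] at this
      rw [← Finset.add_sum_erase _ _ (Finset.mem_univ c)]
      have hsum : ∑ a ∈ Finset.univ.erase c,
            Fintype.card (S m k (FreeGroup.mk [(a.1, !a.2)] * x))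
          ≤ (2 * m - 1) * (k.choose ((k + (L + 2)) / 2) * (2 * m - 1) ^ ((k - (L + 2)) / 2)) := by
        calc
          ∑ a ∈ Finset.univ.erase c,
              Fintype.card (S m k (FreeGroup.mk [(a.1, !a.2)] * x))
              ≤ ∑ _a ∈ Finset.univ.erase c,
                  k.choose ((k + (L + 2)) / 2) * (2 * m - 1) ^ ((k - (L + 2)) / 2) :=
            Finset.sum_le_sum fun a ha => hp a (Finset.ne_of_mem_erase ha)
          _ = (2 * m - 1) * (k.choose ((k + (L + 2)) / 2) * (2 * m - 1) ^ ((k - (L + 2)) / 2)) := by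
            rw [Finset.sum_const, Finset.card_erase_of_mem (Finset.mem_univ c),
              Finset.card_univ, Fintype.card_prod, Fintype.card_fin, Fintype.card_bool,
              smul_eq_mul, mul_comm m 2]
      refine le_trans (Nat.add_le_add hc hsum) ?_
      rcases Nat.eq_zero_or_pos u with hu0 | hu1
      · -- u = 0 : k = L, only the cancelling branch contributes
        subst hu0
        have hkL : k = L := by omega
        have e1 : (k + L) / 2 = k := by omega
        have e2 : (k - L) / 2 = 0 := by omega
        have e3 : (k + (L + 2)) / 2 = k + 1 := by omega
        have e5 : (k + 1 + (L + 1)) / 2 = k + 1 := by omega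
        have e6 : (k + 1 - (L + 1)) / 2 = 0 := by omega
        rw [e1, e2, e3, e5, e6, Nat.choose_self, Nat.choose_succ_self, Nat.choose_self]
        simp
      · -- u ≥ 1 : Pascal's rule gives exact equality
        have e1 : (k + L) / 2 = L + u := by omega
        have e2 : (k - L) / 2 = u := by omega
        have e3 : (k + (L + 2)) / 2 = L + u + 1 := by omega
        have e4 : (k - (L + 2)) / 2 = u - 1 := by omega
        have e5 : (k + 1 + (L + 1)) / 2 = L + u + 1 := by omega
        have e6 : (k + 1 - (L + 1)) / 2 = u := by omega
        rw [e1, e2, e3, e4, e5, e6]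
        have epow : (2 * m - 1) * (2 * m - 1) ^ (u - 1) = (2 * m - 1) ^ u := by
          conv_rhs => rw [show u = (u - 1) + 1 by omega]
          rw [pow_succ]
          ring
        have pas : (k + 1).choose (L + u + 1) = k.choose (L + u) + k.choose (L + u + 1) :=
          Nat.choose_succ_succ _ _
        rw [pas]
        apply le_of_eq
        rw [← epow]
        ring

lemma choose_le_two_pow (k t : ℕ) : k.choose t ≤ 2 ^ k := by
  rcases le_or_gt t k with ht | ht
  · have h1 : k.choose t ≤ ∑ j ∈ Finset.range (k + 1), k.choose j :=
      Finset.single_le_sum (fun j _ => Nat.zero_le _) (Finset.mem_range.mpr (by omega))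
    rwa [Nat.sum_range_choose] at h1
  · rw [Nat.choose_eq_zero_of_lt ht]
    exact Nat.zero_le _

lemma two_mul_choose_le (k t : ℕ) (h : 2 * t ≠ k) : 2 * k.choose t ≤ 2 ^ k := by
  rcases le_or_gt t k with ht | ht
  · have hsub : ({t, k - t} : Finset ℕ) ⊆ Finset.range (k + 1) := by
      intro j hj
      simp only [Finset.mem_insert, Finset.mem_singleton] at hj
      rcases hj with rfl | rfl <;> simp [Finset.mem_range] <;> omega
    have h1 : k.choose t + k.choose (k - t) ≤ ∑ j ∈ Finset.range (k + 1), k.choose j := by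
      calc k.choose t + k.choose (k - t)
          = ∑ j ∈ ({t, k - t} : Finset ℕ), k.choose j := by
            rw [Finset.sum_pair (by omega)]
        _ ≤ ∑ j ∈ Finset.range (k + 1), k.choose j :=
            Finset.sum_le_sum_of_subset hsub
    rw [Nat.sum_range_choose, Nat.choose_symm ht] at h1
    omega
  · rw [Nat.choose_eq_zero_of_lt ht]
    simp

end Stmt2Aux

open Stmt2Aux

/-- Let `d = 2m` be the size of the alphabet
`Π = {π₁, π₁⁻¹, …, π_m, π_m⁻¹}` (encoded as `Fin m × Bool`).  For even `k` and a fixed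
irreducible (reduced) word `x` of length `i` with `0 < i ≤ k`, the number `N_{k,i}` of words of
length `k` over `Π` that reduce to `x` satisfies
`N_{k,i} ≤ (2√(d-1))^k (d-1)^{-i/2} √((d-1)/d)`;
and for `i = 0` (i.e. `x = 1`), `N_{k,0} ≤ (2√(d-1))^k`. -/
theorem stmt2 (m : ℕ) (hm : 1 ≤ m) (d : ℕ) (hd : d = 2 * m) (k i : ℕ)
    (hk : Even k) (hik : i ≤ k)
    (x : FreeGroup (Fin m)) (hx : x.toWord.length = i) :
    (0 < i →
      (Nat.card {w : List (Fin m × Bool) // w.length = k ∧ FreeGroup.mk w = x} : ℝ)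
        ≤ (2 * Real.sqrt ((d : ℝ) - 1)) ^ k * ((d : ℝ) - 1) ^ (-(i : ℝ) / 2)
            * Real.sqrt (((d : ℝ) - 1) / d)) ∧
    (i = 0 →
      (Nat.card {w : List (Fin m × Bool) // w.length = k ∧ FreeGroup.mk w = x} : ℝ)
        ≤ (2 * Real.sqrt ((d : ℝ) - 1)) ^ k) := by
  subst hd
  obtain ⟨w, hw⟩ := hk
  have hkw : k = 2 * w := by omega
  -- real constants
  set D : ℝ := ((2 * m : ℕ) : ℝ) - 1 with hD
  have hm2 : (2 : ℝ) ≤ ((2 * m : ℕ) : ℝ) := by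
    have : (2 : ℕ) ≤ 2 * m := by omega
    exact_mod_cast this
  have hD1 : (1 : ℝ) ≤ D := by rw [hD]; linarith
  have hD0 : (0 : ℝ) ≤ D := by linarith
  have hcast : ((2 * m - 1 : ℕ) : ℝ) = D := by
    rw [hD, Nat.cast_sub (by omega)]
    norm_num
  have hNcard : (Nat.card {w : List (Fin m × Bool) // w.length = k ∧ FreeGroup.mk w = x} : ℝ)
      = (Fintype.card (S m k x) : ℝ) := by
    rw [Nat.card_eq_fintype_card]
  have hb0 := main_bound hm k x
  rw [hx] at hb0
  -- (2 √D)^k = 2^k * D^w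
  have hpow : (2 * Real.sqrt D) ^ k = 2 ^ k * D ^ w := by
    rw [mul_pow, hkw, pow_mul, pow_mul, Real.sq_sqrt hD0, ← pow_mul]
  constructor
  · -- i > 0
    intro hi0
    have hRHSnn : (0:ℝ) ≤ (2 * Real.sqrt D) ^ k * D ^ (-(i : ℝ) / 2) * Real.sqrt (D / (2 * m : ℕ)) := by
      apply mul_nonneg (mul_nonneg (pow_nonneg (by positivity) _) (Real.rpow_nonneg hD0 _))
      exact Real.sqrt_nonneg _
    by_cases hpar : Even i
    · -- i even, ≥ 2
      obtain ⟨v, hv⟩ := hpar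
      have hiv : i = 2 * v := by omega
      have hvw : v ≤ w := by omega
      have hv1 : 1 ≤ v := by omega
      -- index arithmetic
      have e1 : (k + i) / 2 = w + v := by omega
      have e2 : (k - i) / 2 = w - v := by omega
      rw [e1, e2] at hb0
      have hch : 2 * k.choose (w + v) ≤ 2 ^ k :=
        two_mul_choose_le k (w + v) (by omega)
      -- the rpow factor
      have hrpow : D ^ (-(i : ℝ) / 2) = (D ^ v)⁻¹ := by
        have : (-(i : ℝ) / 2) = -(v : ℝ) := by
          rw [hiv]; push_cast; ring
        rw [this, Real.rpow_neg hD0, Real.rpow_natCast]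
      have hDv : (0:ℝ) < D ^ v := by positivity
      have hprod : D ^ w * (D ^ v)⁻¹ = D ^ (w - v) := by
        rw [show w = (w - v) + v by omega, pow_add]
        field_simp
        simp
      have hsq : (1 : ℝ) / 2 ≤ Real.sqrt (D / (2 * m : ℕ)) := by
        have h14 : ((1:ℝ)/2)^2 ≤ D / (2 * m : ℕ) := by
          rw [le_div_iff₀ (by linarith)]
          rw [hD]
          nlinarith
        calc (1:ℝ)/2 = Real.sqrt (((1:ℝ)/2)^2) := by
              rw [Real.sqrt_sq (by norm_num)]
          _ ≤ Real.sqrt (D / (2 * m : ℕ)) := Real.sqrt_le_sqrt h14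
      -- assemble
      have hNb : (Nat.card {w : List (Fin m × Bool) // w.length = k ∧ FreeGroup.mk w = x} : ℝ)
          ≤ (k.choose (w + v) : ℝ) * D ^ (w - v) := by
        rw [hNcard]
        calc (Fintype.card (S m k x) : ℝ)
            ≤ ((k.choose (w + v) * (2 * m - 1) ^ (w - v) : ℕ) : ℝ) := by
              exact_mod_cast hb0
          _ = (k.choose (w + v) : ℝ) * D ^ (w - v) := by
              push_cast [hcast]; ring
      have hch' : (k.choose (w + v) : ℝ) ≤ 2 ^ k / 2 := by
        have : ((2 * k.choose (w + v) : ℕ) : ℝ) ≤ ((2 ^ k : ℕ) : ℝ) := by exact_mod_cast hch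
        push_cast at this
        linarith
      calc (Nat.card {w : List (Fin m × Bool) // w.length = k ∧ FreeGroup.mk w = x} : ℝ)
          ≤ (k.choose (w + v) : ℝ) * D ^ (w - v) := hNb
        _ ≤ (2 ^ k / 2) * D ^ (w - v) := by
            apply mul_le_mul_of_nonneg_right hch' (by positivity)
        _ = (2 ^ k * D ^ (w - v)) * (1 / 2) := by ring
        _ ≤ (2 ^ k * D ^ (w - v)) * Real.sqrt (D / (2 * m : ℕ)) := by
            apply mul_le_mul_of_nonneg_left hsq (by positivity)
        _ = (2 * Real.sqrt D) ^ k * D ^ (-(i : ℝ) / 2) * Real.sqrt (D / (2 * m : ℕ)) := by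
            rw [hpow, hrpow, ← hprod]; ring
        _ = (2 * Real.sqrt ((2 * m : ℕ) - 1)) ^ k * (((2 * m : ℕ) : ℝ) - 1) ^ (-(i : ℝ) / 2)
            * Real.sqrt ((((2 * m : ℕ) : ℝ) - 1) / (2 * m : ℕ)) := by rw [hD]
    · -- i odd: the set is empty
      rw [Nat.not_even_iff] at hpar
      have hno : ¬ ∃ n, k = x.toWord.length + 2 * n := by
        rw [hx]
        rintro ⟨n, hn⟩
        omega
      have h0 : Fintype.card (S m k x) = 0 := card_zero_of_no k x hno
      rw [hNcard, h0]
      simpa using hRHSnn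
  · -- i = 0
    intro hi0
    subst hi0
    have e1 : (k + 0) / 2 = w := by omega
    have e2 : (k - 0) / 2 = w := by omega
    rw [e1, e2] at hb0
    have hch : k.choose w ≤ 2 ^ k := choose_le_two_pow k w
    rw [hNcard]
    calc (Fintype.card (S m k x) : ℝ)
        ≤ ((k.choose w * (2 * m - 1) ^ w : ℕ) : ℝ) := by exact_mod_cast hb0
      _ = (k.choose w : ℝ) * D ^ w := by push_cast [hcast]; ring
      _ ≤ 2 ^ k * D ^ w := by
          apply mul_le_mul_of_nonneg_right _ (by positivity)
          exact_mod_cast hch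
      _ = (2 * Real.sqrt ((2 * m : ℕ) - 1)) ^ k := by rw [← hpow, hD]
end

section
/- Define polynomials q_k by q₁(x) = x, q₂(x) = x² − d, and q_k(x) = x·q_{k−1}(x) − (d−1)·q_{k−2}(x) for k ≥ 3. Then q_k(2√(d−1)·cos θ) = (√(d−1))^k · ( (2/(d−1)) cos kθ + ((d−2)/(d−1)) · sin((k+1)θ)/sin θ ). -/
lemma trig_step (A B a θ : ℝ) (hθ : Real.sin θ ≠ 0) :
    2 * Real.cos θ * (A * Real.cos (a + θ) + B * Real.sin (a + 2*θ) / Real.sin θ)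
      - (A * Real.cos a + B * Real.sin (a + θ) / Real.sin θ)
      = A * Real.cos (a + 2*θ) + B * Real.sin (a + 3*θ) / Real.sin θ := by
  have h2 : a + 2*θ = (a + θ) + θ := by ring
  have h3 : a + 3*θ = ((a + θ) + θ) + θ := by ring
  rw [h2, h3]
  simp only [Real.cos_add, Real.sin_add]
  field_simp
  linear_combination (Real.sin θ * (A * Real.cos a + B * (Real.sin a * Real.cos θ + Real.cos a * Real.sin θ)) + B * (1 - Real.sin θ) * (Real.sin a * Real.cos θ + Real.cos a * Real.sin θ)) * Real.sin_sq_add_cos_sq θ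

/-- The irreducible-trace polynomials: `q₁(x) = x`, `q₂(x) = x² − d`, and
`q_k(x) = x q_{k−1}(x) − (d−1) q_{k−2}(x)` for `k ≥ 3`.  (The value at `k = 0` is irrelevant.) -/
noncomputable def qPoly (d : ℝ) : ℕ → ℝ → ℝ
  | 0 => fun _ => 0
  | 1 => fun x => x
  | 2 => fun x => x ^ 2 - d
  | n + 3 => fun x => x * qPoly d (n + 2) x - (d - 1) * qPoly d (n + 1) x

/-- `q_k(2√(d−1) cos θ) = (√(d−1))^k ((2/(d−1)) cos kθ + ((d−2)/(d−1)) sin((k+1)θ)/sin θ)`. -/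
theorem stmt3 (d : ℕ) (hd : 3 ≤ d) (k : ℕ) (hk : 1 ≤ k) (θ : ℝ) (hθ : Real.sin θ ≠ 0) :
    qPoly (d : ℝ) k (2 * Real.sqrt ((d : ℝ) - 1) * Real.cos θ)
      = (Real.sqrt ((d : ℝ) - 1)) ^ k *
          ((2 / ((d : ℝ) - 1)) * Real.cos (k * θ)
            + (((d : ℝ) - 2) / ((d : ℝ) - 1)) * Real.sin ((k + 1) * θ) / Real.sin θ) := by
  have hd1 : (0:ℝ) < (d:ℝ) - 1 := by
    have : (3:ℝ) ≤ (d:ℝ) := by exact_mod_cast hd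
    linarith
  have hd1' : (d:ℝ) - 1 ≠ 0 := ne_of_gt hd1
  set s := Real.sqrt ((d : ℝ) - 1) with hs
  have hs2 : s ^ 2 = (d:ℝ) - 1 := Real.sq_sqrt hd1.le
  set x := 2 * s * Real.cos θ with hx
  -- the target function
  set f : ℕ → ℝ := fun k => s ^ k *
      ((2 / ((d : ℝ) - 1)) * Real.cos (k * θ)
        + (((d : ℝ) - 2) / ((d : ℝ) - 1)) * Real.sin ((k + 1) * θ) / Real.sin θ) with hf
  suffices h : ∀ n : ℕ, qPoly (d:ℝ) (n+1) x = f (n+1) ∧ qPoly (d:ℝ) (n+2) x = f (n+2) by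
    obtain ⟨m, rfl⟩ : ∃ m, k = m + 1 := ⟨k - 1, (Nat.succ_pred_eq_of_pos hk).symm⟩
    exact (h m).1
  intro n
  induction n with
  | zero =>
    constructor
    · show x = f 1
      simp only [hf]
      push_cast
      have h2 : ((1:ℝ) + 1) * θ = 2 * θ := by ring
      rw [h2, Real.sin_two_mul]
      field_simp
      ring
    · show x ^ 2 - (d:ℝ) = f 2
      simp only [hf]
      push_cast
      have h3 : ((2:ℝ) + 1) * θ = 2 * θ + θ := by ring
      rw [h3, Real.sin_add, Real.sin_two_mul, Real.cos_two_mul, hx]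
      rw [show (2*s*Real.cos θ)^2 = 4 * s^2 * Real.cos θ ^2 by ring, hs2]
      field_simp
      ring
    | succ n ih =>
      obtain ⟨ih1, ih2⟩ := ih
      refine ⟨ih2, ?_⟩
      show x * qPoly (d:ℝ) (n+2) x - ((d:ℝ) - 1) * qPoly (d:ℝ) (n+1) x = f (n+3)
      rw [ih1, ih2]
      simp only [hf]
      push_cast
      set a : ℝ := ((n:ℝ) + 1) * θ with ha
      have e1 : ((n:ℝ) + 2) * θ = a + θ := by rw [ha]; ring
      have e2 : ((n:ℝ) + 3) * θ = a + 2 * θ := by rw [ha]; ring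
      have e3 : ((n:ℝ) + 4) * θ = a + 3 * θ := by rw [ha]; ring
      have e2' : ((n:ℝ) + 2 + 1) * θ = a + 2 * θ := by rw [ha]; ring
      have e3' : ((n:ℝ) + 3 + 1) * θ = a + 3 * θ := by rw [ha]; ring
      have e1' : ((n:ℝ) + 1 + 1) * θ = a + θ := by rw [ha]; ring
      rw [e1, e2, e1', e2', e3']
      have key := trig_step (2 / ((d : ℝ) - 1)) (((d : ℝ) - 2) / ((d : ℝ) - 1)) a θ hθ
      have hsp : s ^ (n+3) = s ^ (n+1) * ((d:ℝ) - 1) := by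
        rw [show n + 3 = (n+1) + 2 by ring, pow_add, hs2]
      have hsp2 : s ^ (n+2) = s ^ (n+1) * s := by rw [pow_succ]
      rw [hx, hsp, hsp2]
      have hss : s * s = (d:ℝ) - 1 := by nlinarith [hs2]
      linear_combination (s ^ (n+1) * ((d:ℝ)-1)) * key + (s^(n+1) * 2 * Real.cos θ * ((2 / ((d : ℝ) - 1)) * Real.cos (a + θ) + (((d : ℝ) - 2) / ((d : ℝ) - 1)) * Real.sin (a + 2*θ) / Real.sin θ)) * hss
end

section
/- A graph H with no leaves (completely pruned) has the property that every edge of H lies on an irreducible (non-backtracking) cycle; conversely, if every edge of H lies on an irreducible cycle, then H has no leaves. -/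
/-- An irreducible (non-backtracking) cycle: a nonempty closed walk in which no step is
immediately followed by its reverse, and the last step is not the reverse of the first. -/
def IsIrredCycle {V : Type*} {G : SimpleGraph V} {v : V} (w : G.Walk v v) : Prop :=
  1 ≤ w.length ∧
  List.Chain' (fun d₁ d₂ : G.Dart => d₂ ≠ d₁.symm) w.darts ∧
  ∀ d₁ ∈ w.darts.head?, ∀ d₂ ∈ w.darts.getLast?, d₁ ≠ d₂.symm

section Aux
set_option linter.unusedSectionVars false


open SimpleGraph List

variable {V : Type*} [Fintype V] [DecidableEq V] {G : SimpleGraph V} [DecidableRel G.Adj]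

lemma step_lemma (h : ∀ x : V, G.degree x ≠ 1) (d : G.Dart) :
    ∃ d' : G.Dart, d'.fst = d.snd ∧ d' ≠ d.symm := by
  have hadj : G.Adj d.snd d.fst := d.adj.symm
  have h1 : 0 < G.degree d.snd := by
    rw [G.degree_pos_iff_exists_adj]
    exact ⟨d.fst, hadj⟩
  have h2 : 2 ≤ G.degree d.snd := by
    have := h d.snd; omega
  rw [← G.card_neighborFinset_eq_degree] at h2
  obtain ⟨w, hw, hwne⟩ := Finset.exists_mem_ne (s := G.neighborFinset d.snd) (by omega) d.fst
  rw [SimpleGraph.mem_neighborFinset] at hw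
  refine ⟨⟨(d.snd, w), hw⟩, rfl, ?_⟩
  intro hc
  apply hwne
  have := congrArg (fun d : G.Dart => d.snd) hc
  simpa [SimpleGraph.Dart.symm] using this

set_option linter.unusedSectionVars false

/-- Nonbacktracking dart sequence starting with a given dart. -/
lemma exists_seq (h : ∀ x : V, G.degree x ≠ 1) (d₀ : G.Dart) :
    ∃ f : ℕ → G.Dart, f 0 = d₀ ∧ ∀ n, (f (n+1)).fst = (f n).snd ∧ f (n+1) ≠ (f n).symm := by
  choose g hg1 hg2 using step_lemma h
  refine ⟨fun n => Nat.rec d₀ (fun _ d => g d) n, rfl, fun n => ⟨hg1 _, hg2 _⟩⟩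

/-- Build a walk out of a compatible dart sequence segment. -/
lemma exists_seg (f : ℕ → G.Dart) (hf : ∀ n, (f (n+1)).fst = (f n).snd) :
    ∀ (n a : ℕ), ∃ w : G.Walk (f a).fst (f (a+n)).snd,
      w.darts = (List.range (n+1)).map (fun k => f (a+k)) := by
  intro n
  induction n with
  | zero =>
    intro a
    refine ⟨Walk.cons (f a).adj Walk.nil, ?_⟩
    simp [List.range_succ]
  | succ n ih =>
    intro a
    obtain ⟨w, hw⟩ := ih (a+1)
    have hcast : (f (a+1)).fst = (f a).snd := hf a
    have hcast2 : (a+1)+n = a+(n+1) := by omega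
    refine ⟨Walk.cons (f a).adj ((w.copy hcast (by rw [hcast2])) : G.Walk (f a).snd (f (a+(n+1))).snd), ?_⟩
    simp only [Walk.darts_cons, Walk.darts_copy, hw]
    rw [show (List.range (n+1+1)) = 0 :: (List.range (n+1)).map Nat.succ from List.range_succ_eq_map]
    simp only [List.map_cons, List.map_map]
    refine congrArg₂ List.cons rfl ?_
    apply List.map_congr_left
    intro k _
    show f (a + 1 + k) = f (a + (k+1))
    congr 1
    omega

lemma head?_map_range {α : Type*} (g : ℕ → α) (n : ℕ) (h : 0 < n) :
    ((List.range n).map g).head? = some (g 0) := by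
  obtain ⟨m, rfl⟩ := Nat.exists_eq_succ_of_ne_zero h.ne'
  rw [List.range_succ_eq_map]
  simp

lemma getLast?_map_range {α : Type*} (g : ℕ → α) (n : ℕ) (h : 0 < n) :
    ((List.range n).map g).getLast? = some (g (n-1)) := by
  obtain ⟨m, rfl⟩ := Nat.exists_eq_succ_of_ne_zero h.ne'
  rw [List.range_succ]
  simp

lemma chain'_map_range {α : Type*} (R : α → α → Prop) (g : ℕ → α) (n : ℕ)
    (h : ∀ k, k+1 < n → R (g k) (g (k+1))) : List.Chain' R ((List.range n).map g) := by
  rw [List.Chain', List.isChain_map]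
  cases n with
  | zero => simp
  | succ m =>
    rw [List.isChain_range_succ]
    intro k hk
    exact h k (by omega)


lemma symm_ne_symm {d₁ d₂ : G.Dart} (h : d₁ ≠ d₂) : d₁.symm ≠ d₂.symm :=
  fun hc => h (SimpleGraph.Dart.symm_involutive.injective hc)

lemma lollipop (h : ∀ x : V, G.degree x ≠ 1) (d₀ : G.Dart) :
    (∃ (v : V) (w : G.Walk v v), IsIrredCycle w ∧ d₀.edge ∈ w.edges) ∨
    ∃ P : G.Walk d₀.snd d₀.snd, 1 ≤ P.length ∧
      List.Chain' (fun d₁ d₂ : G.Dart => d₂ ≠ d₁.symm) P.darts ∧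
      (∀ d ∈ P.darts.head?, d ≠ d₀.symm) ∧ (∀ d ∈ P.darts.getLast?, d ≠ d₀) := by
  obtain ⟨d', hd'1, hd'2⟩ := step_lemma h d₀
  obtain ⟨f, hf0, hf⟩ := exists_seq h d'
  have hcomp : ∀ k, (f (k+1)).fst = (f k).snd := fun k => (hf k).1
  have hchain : ∀ k, f (k+1) ≠ (f k).symm := fun k => (hf k).2
  have hex : ∃ j, ∃ i < j, f i = f j := by
    set N := Fintype.card G.Dart with hN
    have hni : ¬ Function.Injective (fun k : Fin (N+1) => f k) := by
      intro hinj
      have := Fintype.card_le_of_injective _ hinj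
      simp [hN] at this
    rw [Function.not_injective_iff] at hni
    obtain ⟨a, b, hab, hne⟩ := hni
    have hvne : (a : ℕ) ≠ (b : ℕ) := fun hc => hne (Fin.ext hc)
    rcases Nat.lt_or_ge (a : ℕ) (b : ℕ) with hlt | hge
    · exact ⟨b, a, hlt, hab⟩
    · exact ⟨a, b, by omega, hab.symm⟩
  set j := Nat.find hex with hj
  obtain ⟨i, hij, hfij⟩ := Nat.find_spec hex
  have hinj : ∀ a b, a < b → b < j → f a ≠ f b := by
    intro a b hab hbj hc
    exact Nat.find_min hex hbj ⟨a, hab, hc⟩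
  have hj1 : 1 ≤ j := by omega
  have e1 : (f 0).fst = d₀.snd := by rw [hf0]; exact hd'1
  rcases Nat.eq_zero_or_pos i with hi0 | hi1
  · -- cycle through f 0 directly
    subst hi0
    obtain ⟨C, hC⟩ := exists_seg f hcomp (j-1) 0
    simp only [Nat.zero_add] at hC
    rw [Nat.sub_add_cancel hj1] at hC
    have e2 : (f (0+(j-1))).snd = d₀.snd := by
      have h1 : (f ((j-1)+1)).fst = (f (j-1)).snd := hcomp (j-1)
      have h2 : (j-1)+1 = j := by omega
      rw [h2] at h1
      rw [Nat.zero_add, ← h1, ← hfij, e1]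
    let C' := C.copy e1 e2
    have hC' : C'.darts = (List.range j).map f := by
      simpa [C'] using hC
    have hlen : 1 ≤ C'.length := by
      rw [← SimpleGraph.Walk.length_darts, hC', List.length_map, List.length_range]
      omega
    have hch : List.Chain' (fun d₁ d₂ : G.Dart => d₂ ≠ d₁.symm) C'.darts := by
      rw [hC']
      exact chain'_map_range _ f j (fun k _ => hchain k)
    have hhead : C'.darts.head? = some (f 0) := by rw [hC']; exact head?_map_range f j hj1
    have hlast : C'.darts.getLast? = some (f (j-1)) := by rw [hC']; exact getLast?_map_range f j hj1
    have hwrap : f 0 ≠ (f (j-1)).symm := by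
      have : f ((j-1)+1) ≠ (f (j-1)).symm := hchain (j-1)
      rwa [show (j-1)+1 = j by omega, ← hfij] at this
    by_cases hd : f (j-1) = d₀
    · left
      refine ⟨d₀.snd, C', ⟨hlen, hch, ?_⟩, ?_⟩
      · intro d₁ h₁ d₂ h₂
        rw [hhead, Option.mem_def, Option.some_inj] at h₁
        rw [hlast, Option.mem_def, Option.some_inj] at h₂
        subst h₁; subst h₂; exact hwrap
      · have hmem : d₀ ∈ C'.darts := by
          rw [hC', ← hd]
          exact List.mem_map_of_mem (f := f) (List.mem_range.2 (by omega))
        exact List.mem_map_of_mem hmem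
    · right
      refine ⟨C', hlen, hch, ?_, ?_⟩
      · intro d hd'
        rw [hhead, Option.mem_def, Option.some_inj] at hd'
        subst hd'; rw [hf0]; exact hd'2
      · intro d hd'
        rw [hlast, Option.mem_def, Option.some_inj] at hd'
        subst hd'; exact hd
  · -- proper lollipop
    obtain ⟨A, hA⟩ := exists_seg f hcomp (i-1) 0
    simp only [Nat.zero_add] at hA
    rw [Nat.sub_add_cancel hi1] at hA
    obtain ⟨C, hC⟩ := exists_seg f hcomp (j-1-i) i
    rw [show (j-1-i)+1 = j-i by omega] at hC
    have eC1 : (f i).fst = (f (0+(i-1))).snd := by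
      rw [Nat.zero_add]
      have := hcomp (i-1)
      rwa [show (i-1)+1 = i by omega] at this
    have eC2 : (f (i+(j-1-i))).snd = (f (0+(i-1))).snd := by
      rw [show i+(j-1-i) = j-1 by omega, Nat.zero_add]
      have h1 := hcomp (j-1)
      rw [show (j-1)+1 = j by omega] at h1
      have h2 := hcomp (i-1)
      rw [show (i-1)+1 = i by omega] at h2
      rw [← h1, ← hfij, h2]
    let P0 := A.append ((C.copy eC1 eC2).append A.reverse)
    let P := P0.copy e1 e1
    have hPd : P.darts = ((List.range i).map f) ++
        (((List.range (j-i)).map (fun k => f (i+k))) ++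
          (((List.range i).map f).map SimpleGraph.Dart.symm).reverse) := by
      simp only [P, P0, SimpleGraph.Walk.darts_copy, SimpleGraph.Walk.darts_append,
        SimpleGraph.Walk.darts_reverse, hA, hC]
    have hAne : ((List.range i).map f) ≠ [] := by
      intro hc
      have := congrArg List.length hc
      simp at this
      omega
    have hCne : ((List.range (j-i)).map (fun k => f (i+k))) ≠ [] := by
      intro hc
      have := congrArg List.length hc
      simp at this
      omega
    refine Or.inr ⟨P, ?_, ?_, ?_, ?_⟩
    · rw [← SimpleGraph.Walk.length_darts, hPd]
      simp
      omega
    · rw [hPd, List.Chain', List.isChain_append, List.isChain_append]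
      refine ⟨chain'_map_range _ f i (fun k _ => hchain k),
        ⟨?_, ?_, ?_⟩, ?_⟩
      · exact chain'_map_range _ _ (j-i) (fun k hk => by
          have := hchain (i+k)
          rwa [show (i+k)+1 = i+(k+1) by omega] at this)
      · rw [List.isChain_reverse, List.map_map]
        apply chain'_map_range
        intro k hk
        show (f k).symm ≠ ((f (k+1)).symm).symm
        rw [SimpleGraph.Dart.symm_symm]
        exact fun hc => hchain k hc.symm
      · -- junction lC → reversed A
        intro x hx y hy
        rw [getLast?_map_range _ _ (by omega), Option.mem_def, Option.some_inj] at hx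
        rw [List.head?_reverse, List.map_map, getLast?_map_range _ _ hi1,
          Option.mem_def, Option.some_inj] at hy
        subst hx; subst hy
        rw [show i+(j-i-1) = j-1 by omega]
        exact symm_ne_symm (hinj (i-1) (j-1) (by omega) (by omega))
      · -- junction A → middle
        intro x hx y hy
        rw [getLast?_map_range _ _ hi1, Option.mem_def, Option.some_inj] at hx
        rw [List.head?_append_of_ne_nil _ hCne, head?_map_range _ _ (by omega),
          Option.mem_def, Option.some_inj] at hy
        subst hx; subst hy
        have := hchain (i-1)
        rw [show (i-1)+1 = i by omega] at this
        simpa using this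
    · intro d hd
      rw [hPd, List.head?_append_of_ne_nil _ hAne, head?_map_range _ _ hi1,
        Option.mem_def, Option.some_inj] at hd
      subst hd; rw [hf0]; exact hd'2
    · intro d hd
      rw [hPd, List.getLast?_append_of_ne_nil _ (by simp; omega),
        List.getLast?_append_of_ne_nil _ (by simp; omega),
        List.getLast?_reverse, List.map_map, head?_map_range _ _ hi1,
        Option.mem_def, Option.some_inj] at hd
      subst hd
      intro hc
      apply hd'2
      have hc' : (f 0).symm = d₀ := hc
      rw [← hc', SimpleGraph.Dart.symm_symm, hf0]

lemma reverse_dir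
    (hcyc : ∀ e ∈ G.edgeSet, ∃ (v : V) (w : G.Walk v v), IsIrredCycle w ∧ e ∈ w.edges)
    (v : V) : G.degree v ≠ 1 := by
  intro hdeg
  rw [← SimpleGraph.card_neighborFinset_eq_degree, Finset.card_eq_one] at hdeg
  obtain ⟨u, hu⟩ := hdeg
  have hadj : G.Adj v u := by
    rw [← SimpleGraph.mem_neighborFinset, hu]; exact Finset.mem_singleton_self u
  have huniq : ∀ x, G.Adj v x → x = u := by
    intro x hx
    have hx' : x ∈ G.neighborFinset v := (SimpleGraph.mem_neighborFinset G v x).2 hx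
    rw [hu, Finset.mem_singleton] at hx'; exact hx'
  have hfst : ∀ d : G.Dart, d.fst = v → d = ⟨(v,u), hadj⟩ := by
    intro d hdv
    have h2 : d.snd = u := huniq _ (hdv ▸ d.adj)
    exact SimpleGraph.Dart.ext _ _ (Prod.ext hdv h2)
  have hsnd : ∀ d : G.Dart, d.snd = v → d = ⟨(u,v), hadj.symm⟩ := by
    intro d hdv
    have h2 : d.fst = u := huniq _ (hdv ▸ d.adj.symm)
    exact SimpleGraph.Dart.ext _ _ (Prod.ext h2 hdv)
  obtain ⟨x, w, ⟨hlen, hch, hwrap⟩, hmem⟩ := hcyc s(v,u) hadj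
  have hlne : w.darts ≠ [] := by
    have h0 := SimpleGraph.Walk.length_darts w
    intro hc
    rw [hc] at h0
    simp only [List.length_nil] at h0
    omega
  have hDA := w.isChain_dartAdj_darts
  replace hDA : ∀ (i : ℕ) (h : i < w.darts.length - 1), G.DartAdj (w.darts.get ⟨i, by omega⟩) (w.darts.get ⟨i+1, by omega⟩) := fun i h => List.isChain_iff_getElem.mp hDA i (by omega)
  have hch' := hch
  replace hch' : ∀ (i : ℕ) (h : i < w.darts.length - 1), (w.darts.get ⟨i+1, by omega⟩) ≠ (w.darts.get ⟨i, by omega⟩).symm := fun i h => List.isChain_iff_getElem.mp hch' i (by omega)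
  have hd : ∃ d ∈ w.darts, d.edge = s(v,u) := by
    simpa [SimpleGraph.Walk.edges] using hmem
  obtain ⟨d, hdl, hde⟩ := hd
  obtain ⟨k, hk⟩ := List.get_of_mem hdl
  rw [SimpleGraph.dart_edge_eq_mk'_iff] at hde
  have hhead : (w.darts.head hlne).fst = x := by rw [w.head_darts_eq_firstDart hlne]; rfl
  have hlast : (w.darts.getLast hlne).snd = x := by rw [w.getLast_darts_eq_lastDart hlne]; rfl
  have hhead? : w.darts.head? = some (w.darts.head hlne) := List.head?_eq_head hlne
  have hlast? : w.darts.getLast? = some (w.darts.getLast hlne) :=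
    List.getLast?_eq_getLast_of_ne_nil hlne
  rcases hde with hvu | huv
  · -- d = (v,u) : outgoing; look at predecessor
    rcases Nat.eq_zero_or_pos k.val with hk0 | hk1
    · -- d is the head
      have hdh : w.darts.head hlne = d := by
        rw [← hk, List.head_eq_getElem_zero hlne]
        simp [List.get_eq_getElem]
        congr 1
        omega
      have hxv : x = v := by
        rw [← hhead, hdh]
        exact congrArg Prod.fst hvu
      have hL : w.darts.getLast hlne = ⟨(u,v), hadj.symm⟩ :=
        hsnd _ (by rw [hlast, hxv])
      refine hwrap d (by rw [hhead?, hdh]; rfl) (w.darts.getLast hlne) (by rw [hlast?]; rfl) ?_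
      apply SimpleGraph.Dart.ext
      rw [hL, hvu]
      rfl
    · -- predecessor
      have h1 : k.val - 1 < w.darts.length - 1 := by omega
      have e : w.darts.get ⟨k.val-1+1, by omega⟩ = d := by
        have hkk : (⟨k.val-1+1, by omega⟩ : Fin w.darts.length) = k :=
          Fin.ext (show k.val-1+1 = k.val by omega)
        rw [hkk, hk]
      have hDAk := hDA (k.val-1) h1
      rw [e] at hDAk
      have hd'snd : (w.darts.get ⟨k.val-1, by omega⟩).snd = v := by
        rw [hDAk, hvu]
      have hd' := hsnd _ hd'snd
      have hchk := hch' (k.val-1) h1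
      rw [e] at hchk
      refine hchk ?_
      apply SimpleGraph.Dart.ext
      rw [hd', hvu]
      rfl
  · -- d = (u,v) : incoming; look at successor
    change d.toProd = (u, v) at huv
    rcases Nat.lt_or_ge (k.val+1) w.darts.length with hk1 | hk2
    · have h1 : k.val < w.darts.length - 1 := by omega
      have e0 : w.darts.get ⟨k.val, by omega⟩ = d := by
        have hkk : (⟨k.val, by omega⟩ : Fin w.darts.length) = k := Fin.ext rfl
        rw [hkk, hk]
      have hDAk := hDA k.val h1
      rw [e0] at hDAk
      have hd'fst : (w.darts.get ⟨k.val+1, by omega⟩).fst = v := by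
        rw [← hDAk, huv]
      have hd' := hfst _ hd'fst
      have hchk := hch' k.val h1
      rw [e0] at hchk
      refine hchk ?_
      apply SimpleGraph.Dart.ext
      rw [hd', SimpleGraph.Dart.symm_toProd, huv]
      rfl
    · -- d is the last dart
      have hdL : w.darts.getLast hlne = d := by
        rw [← hk, List.getLast_eq_getElem]
        simp [List.get_eq_getElem]
        congr 1
        have h2 := k.isLt
        have h3 := SimpleGraph.Walk.length_darts w
        omega
      have hxv : x = v := by
        rw [← hlast, hdL]
        exact congrArg Prod.snd huv
      have hH : w.darts.head hlne = ⟨(v,u), hadj⟩ :=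
        hfst _ (by rw [hhead, hxv])
      refine hwrap (w.darts.head hlne) (by rw [hhead?]; rfl) d (by rw [hlast?, hdL]; rfl) ?_
      apply SimpleGraph.Dart.ext
      rw [hH, SimpleGraph.Dart.symm_toProd, huv]
      rfl

lemma forward_dir (h : ∀ x : V, G.degree x ≠ 1) :
    ∀ e ∈ G.edgeSet, ∃ (v : V) (w : G.Walk v v), IsIrredCycle w ∧ e ∈ w.edges := by
  intro e he
  induction e using Sym2.ind with
  | _ a b =>
  rw [SimpleGraph.mem_edgeSet] at he
  set d₀ : G.Dart := ⟨(a,b), he⟩ with hd₀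
  rcases lollipop h d₀ with hL | ⟨F, hF1, hF2, hF3, hF4⟩
  · obtain ⟨v, w, hc, hm⟩ := hL
    exact ⟨v, w, hc, by simpa [hd₀, SimpleGraph.Dart.edge] using hm⟩
  rcases lollipop h d₀.symm with hL | ⟨B, hB1, hB2, hB3, hB4⟩
  · obtain ⟨v, w, hc, hm⟩ := hL
    exact ⟨v, w, hc, by simpa [hd₀, SimpleGraph.Dart.edge, Sym2.eq_swap] using hm⟩
  have hFne : F.darts ≠ [] := by
    have h0 := SimpleGraph.Walk.length_darts F
    intro hc; rw [hc] at h0; simp only [List.length_nil] at h0; omega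
  have hBne : B.darts ≠ [] := by
    have h0 := SimpleGraph.Walk.length_darts B
    intro hc; rw [hc] at h0; simp only [List.length_nil] at h0; omega
  refine ⟨a, SimpleGraph.Walk.cons he (F.append (SimpleGraph.Walk.cons he.symm B)), ⟨?_, ?_, ?_⟩, ?_⟩
  · simp only [SimpleGraph.Walk.length_cons]
    omega
  · have hdarts : (SimpleGraph.Walk.cons he (F.append (SimpleGraph.Walk.cons he.symm B))).darts
        = d₀ :: (F.darts ++ d₀.symm :: B.darts) := by
      simp only [SimpleGraph.Walk.darts_cons, SimpleGraph.Walk.darts_append]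
      rfl
    erw [hdarts]
    rw [show d₀ :: (F.darts ++ d₀.symm :: B.darts)
        = (d₀ :: F.darts) ++ (d₀.symm :: B.darts) by simp]
    rw [List.Chain', List.isChain_append]
    refine ⟨?_, ?_, ?_⟩
    · rw [List.isChain_cons]
      exact ⟨fun y hy => hF3 y hy, hF2⟩
    · rw [List.isChain_cons]
      exact ⟨fun y hy => hB3 y hy, hB2⟩
    · intro x hx y hy
      rw [show d₀ :: F.darts = [d₀] ++ F.darts from rfl,
        List.getLast?_append_of_ne_nil _ hFne] at hx
      obtain rfl : d₀.symm = y := by simpa using hy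
      exact (symm_ne_symm (hF4 x hx)).symm
  · intro d₁ h₁ d₂ h₂
    have hdarts : (SimpleGraph.Walk.cons he (F.append (SimpleGraph.Walk.cons he.symm B))).darts
        = d₀ :: (F.darts ++ d₀.symm :: B.darts) := by
      simp only [SimpleGraph.Walk.darts_cons, SimpleGraph.Walk.darts_append]
      rfl
    erw [hdarts] at h₁ h₂
    obtain rfl : d₀ = d₁ := by simpa using h₁
    have h₂' : d₂ ∈ B.darts.getLast? := by
      rwa [show d₀ :: (F.darts ++ d₀.symm :: B.darts)
          = (d₀ :: F.darts ++ [d₀.symm]) ++ B.darts by simp,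
        List.getLast?_append_of_ne_nil _ hBne] at h₂
    intro hc
    exact hB4 d₂ h₂' (by rw [hc, SimpleGraph.Dart.symm_symm])
  · have hdarts : (SimpleGraph.Walk.cons he (F.append (SimpleGraph.Walk.cons he.symm B))).darts
        = d₀ :: (F.darts ++ d₀.symm :: B.darts) := by
      simp only [SimpleGraph.Walk.darts_cons, SimpleGraph.Walk.darts_append]
      rfl
    show s(a,b) ∈ (SimpleGraph.Walk.cons he (F.append (SimpleGraph.Walk.cons he.symm B))).darts.map SimpleGraph.Dart.edge
    rw [hdarts]
    exact List.mem_map.2 ⟨d₀, List.mem_cons_self, rfl⟩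


end Aux

/-- A finite graph has no leaves (is completely pruned) if and only if each of
its edges lies on an irreducible (non-backtracking) cycle. -/
theorem stmt7 {V : Type*} [Fintype V] [DecidableEq V] (G : SimpleGraph V)
    [DecidableRel G.Adj] :
    (∀ v : V, G.degree v ≠ 1) ↔
      ∀ e ∈ G.edgeSet, ∃ (v : V) (w : G.Walk v v), IsIrredCycle w ∧ e ∈ w.edges := by
  exact ⟨fun h => forward_dir h, fun h v => reverse_dir h v⟩
end

section
/- If G is a connected d-regular graph with d ≥ 3, then the non-backtracking edge graph G_irred is strongly connected. -/
open Finset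

/-- The step relation of the non-backtracking edge graph `G_irred`: from dart `d₁` one may move
to dart `d₂` when `d₂` starts where `d₁` ends and `d₂` is not the reverse of `d₁`. -/
def IrredStep {V : Type*} (G : SimpleGraph V) (d₁ d₂ : G.Dart) : Prop :=
  d₁.toProd.2 = d₂.toProd.1 ∧ d₂ ≠ d₁.symm

section Aux

variable {V : Type*} [Fintype V] [DecidableEq V] {G : SimpleGraph V} [DecidableRel G.Adj]

instance : DecidableEq G.Dart := fun a b => by
  rw [SimpleGraph.Dart.ext_iff]; infer_instance

instance (d₁ d₂ : G.Dart) : Decidable (IrredStep G d₁ d₂) := by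
  unfold IrredStep; infer_instance

lemma irred_out_card {d : ℕ} (hreg : G.IsRegularOfDegree d) (g : G.Dart) :
    (univ.filter fun h : G.Dart => IrredStep G g h).card = d - 1 := by
  have h1 : (univ.filter fun h : G.Dart => IrredStep G g h)
      = (univ.filter fun h : G.Dart => h.fst = g.snd).erase g.symm := by
    ext h
    simp only [Finset.mem_coe, Finset.mem_filter, Finset.mem_univ, true_and, Finset.mem_erase]; simp only [IrredStep]
    constructor
    · rintro ⟨h1, h2⟩; exact ⟨h2, h1.symm⟩
    · rintro ⟨h2, h1⟩; exact ⟨h1.symm, h2⟩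
  have hmem : g.symm ∈ (univ.filter fun h : G.Dart => h.fst = g.snd) := by
    simp [SimpleGraph.Dart.symm]
  rw [h1, Finset.card_erase_of_mem hmem, SimpleGraph.dart_fst_fiber_card_eq_degree,
    hreg g.snd]

lemma irred_in_card {d : ℕ} (hreg : G.IsRegularOfDegree d) (h : G.Dart) :
    (univ.filter fun g : G.Dart => IrredStep G g h).card = d - 1 := by
  have himg : (univ.filter fun g : G.Dart => IrredStep G g h)
      = ((univ.filter fun g' : G.Dart => IrredStep G h.symm g').image SimpleGraph.Dart.symm) := by
    ext g
    simp only [Finset.mem_coe, Finset.mem_filter, Finset.mem_univ, true_and, Finset.mem_image]; simp only [IrredStep]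
    constructor
    · rintro ⟨h1, h2⟩
      refine ⟨g.symm, ⟨?_, ?_⟩, g.symm_symm⟩
      · exact h1.symm
      · intro hc
        rw [SimpleGraph.Dart.symm_symm] at hc
        exact h2 hc.symm
    · rintro ⟨g', ⟨h1, h2⟩, rfl⟩
      rw [SimpleGraph.Dart.symm_symm] at h2
      refine ⟨?_, ?_⟩
      · exact h1.symm
      · intro hc
        rw [SimpleGraph.Dart.symm_symm] at hc
        exact h2 hc.symm
  rw [himg, Finset.card_image_of_injective _ (SimpleGraph.Dart.symm_involutive.injective)]
  exact irred_out_card hreg h.symm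

/-- Counting argument: a step-closed set of darts is closed under taking step-predecessors,
because in-degrees and out-degrees in the dart graph coincide. -/
lemma mem_of_step_closed {d : ℕ} (hreg : G.IsRegularOfDegree d) (S : Finset G.Dart)
    (hS : ∀ g ∈ S, ∀ h : G.Dart, IrredStep G g h → h ∈ S)
    {e f : G.Dart} (hef : IrredStep G e f) (hf : f ∈ S) : e ∈ S := by
  classical
  set A : Finset (G.Dart × G.Dart) := univ.filter (fun p => IrredStep G p.1 p.2) with hA
  set A₁ := A.filter (fun p => p.1 ∈ S) with hA₁
  set A₂ := A.filter (fun p => p.2 ∈ S) with hA₂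
  have hsub : A₁ ⊆ A₂ := by
    intro p hp
    simp only [hA₁, hA₂, hA, mem_filter, mem_univ, true_and] at hp ⊢
    exact ⟨hp.1, hS _ hp.2 _ hp.1⟩
  have fib1 : ∀ g ∈ S, (A₁.filter fun p => p.1 = g).card = d - 1 := by
    intro g hg
    have : (A₁.filter fun p => p.1 = g)
        = (univ.filter fun h : G.Dart => IrredStep G g h).image (fun h => (g, h)) := by
      ext ⟨a, b⟩
      simp only [hA₁, hA, mem_filter, mem_univ, true_and, mem_image, Prod.mk.injEq]
      constructor
      · rintro ⟨⟨h1, _⟩, rfl⟩; exact ⟨b, h1, rfl, rfl⟩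
      · rintro ⟨h', h1, rfl, rfl⟩; exact ⟨⟨h1, hg⟩, rfl⟩
    rw [this, Finset.card_image_of_injective _ (fun a b hab => by simpa using hab)]
    exact irred_out_card hreg g
  have fib2 : ∀ h ∈ S, (A₂.filter fun p => p.2 = h).card = d - 1 := by
    intro h hh
    have : (A₂.filter fun p => p.2 = h)
        = (univ.filter fun g : G.Dart => IrredStep G g h).image (fun g => (g, h)) := by
      ext ⟨a, b⟩
      simp only [hA₂, hA, mem_filter, mem_univ, true_and, mem_image, Prod.mk.injEq]
      constructor
      · rintro ⟨⟨h1, _⟩, rfl⟩; exact ⟨a, h1, rfl, rfl⟩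
      · rintro ⟨g', h1, rfl, rfl⟩; exact ⟨⟨h1, hh⟩, rfl⟩
    rw [this, Finset.card_image_of_injective _ (fun a b hab => by simpa using hab)]
    exact irred_in_card hreg h
  have hc1 : A₁.card = S.card * (d - 1) := by
    rw [Finset.card_eq_sum_card_fiberwise (f := fun p => p.1) (t := S)
      (fun p hp => by simp only [hA₁, Finset.mem_coe, Finset.mem_filter] at hp; exact hp.2)]
    rw [Finset.sum_congr rfl fib1, Finset.sum_const, smul_eq_mul]
  have hc2 : A₂.card = S.card * (d - 1) := by
    rw [Finset.card_eq_sum_card_fiberwise (f := fun p => p.2) (t := S)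
      (fun p hp => by simp only [hA₂, Finset.mem_coe, Finset.mem_filter] at hp; exact hp.2)]
    rw [Finset.sum_congr rfl fib2, Finset.sum_const, smul_eq_mul]
  have heq : A₁ = A₂ := Finset.eq_of_subset_of_card_le hsub (by rw [hc1, hc2])
  have hmem : (e, f) ∈ A₂ := by
    simp only [hA₂, hA, mem_filter, mem_univ, true_and]
    exact ⟨hef, hf⟩
  rw [← heq] at hmem
  simp only [hA₁, mem_filter] at hmem
  exact hmem.2

lemma reach_rev {d : ℕ} (hreg : G.IsRegularOfDegree d) {e f : G.Dart}
    (h : IrredStep G e f) : Relation.ReflTransGen (IrredStep G) f e := by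
  classical
  set S : Finset G.Dart := univ.filter (fun g => Relation.ReflTransGen (IrredStep G) f g) with hSdef
  have hS : ∀ g ∈ S, ∀ h : G.Dart, IrredStep G g h → h ∈ S := by
    intro g hg h' hgh'
    simp only [hSdef, mem_filter, mem_univ, true_and] at hg ⊢
    exact hg.tail hgh'
  have hf : f ∈ S := mem_filter.mpr ⟨mem_univ f, Relation.ReflTransGen.refl⟩
  have := mem_of_step_closed hreg S hS h hf
  simpa [hSdef] using this

lemma reach_symm {d : ℕ} (hreg : G.IsRegularOfDegree d) {e f : G.Dart}
    (h : Relation.ReflTransGen (IrredStep G) e f) :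
    Relation.ReflTransGen (IrredStep G) f e := by
  induction h with
  | refl => exact Relation.ReflTransGen.refl
  | tail _ hbc ih => exact (reach_rev hreg hbc).trans ih

/-- Key lemma: every dart can reach its own reversal. -/
lemma reach_own_symm {d : ℕ} (hd : 3 ≤ d) (hreg : G.IsRegularOfDegree d) (e : G.Dart) :
    Relation.ReflTransGen (IrredStep G) e e.symm := by
  have hcard : 1 < ((G.neighborFinset e.snd).erase e.fst).card := by
    rw [Finset.card_erase_of_mem ((SimpleGraph.mem_neighborFinset G e.snd e.fst).mpr e.adj.symm),
      SimpleGraph.card_neighborFinset_eq_degree, hreg e.snd]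
    omega
  obtain ⟨w₁, hw₁, w₂, hw₂, hne⟩ := Finset.one_lt_card.mp hcard
  rw [Finset.mem_erase, SimpleGraph.mem_neighborFinset G e.snd] at hw₁ hw₂
  set g₁ : G.Dart := ⟨(w₁, e.snd), hw₁.2.symm⟩ with hg₁
  set g₂ : G.Dart := ⟨(e.snd, w₂), hw₂.2⟩ with hg₂
  have s1 : IrredStep G e g₂ := by
    refine ⟨rfl, ?_⟩
    intro hc
    have : w₂ = e.fst := congrArg (fun x : G.Dart => x.snd) hc
    exact hw₂.1 this
  have s2 : IrredStep G g₁ g₂ := by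
    refine ⟨rfl, ?_⟩
    intro hc
    have : w₂ = w₁ := congrArg (fun x : G.Dart => x.snd) hc
    exact hne (this ▸ rfl)
  have s3 : IrredStep G g₁ e.symm := by
    refine ⟨rfl, ?_⟩
    intro hc
    have : e.fst = w₁ := congrArg (fun x : G.Dart => x.snd) hc
    exact hw₁.1 this.symm
  exact ((Relation.ReflTransGen.single s1).trans
    (reach_symm hreg (Relation.ReflTransGen.single s2))).trans
    (Relation.ReflTransGen.single s3)

lemma reach_of_snd_eq_fst {d : ℕ} (hd : 3 ≤ d) (hreg : G.IsRegularOfDegree d)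
    {e f : G.Dart} (h : e.snd = f.fst) :
    Relation.ReflTransGen (IrredStep G) e f := by
  by_cases hc : f = e.symm
  · rw [hc]; exact reach_own_symm hd hreg e
  · exact Relation.ReflTransGen.single ⟨h, hc⟩

lemma reach_of_walk {d : ℕ} (hd : 3 ≤ d) (hreg : G.IsRegularOfDegree d)
    {a b : V} (p : G.Walk a b) :
    ∀ (e f : G.Dart), e.snd = a → f.fst = b →
      Relation.ReflTransGen (IrredStep G) e f := by
  induction p with
  | nil =>
    intro e f he hf
    exact reach_of_snd_eq_fst hd hreg (by rw [he, hf])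
  | @cons u v w h p ih =>
    intro e f he hf
    exact (reach_of_snd_eq_fst hd hreg (e := e) (f := ⟨(u, v), h⟩) he).trans
      (ih ⟨(u, v), h⟩ f rfl hf)

end Aux

/-- If `G` is a connected `d`-regular finite graph with `d ≥ 3`, then the
non-backtracking edge graph `G_irred` is strongly connected. -/
theorem stmt9 {V : Type*} [Fintype V] [DecidableEq V] (G : SimpleGraph V)
    [DecidableRel G.Adj] (d : ℕ) (hd : 3 ≤ d)
    (hreg : G.IsRegularOfDegree d) (hconn : G.Connected) :
    ∀ d₁ d₂ : G.Dart, Relation.ReflTransGen (IrredStep G) d₁ d₂ := by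
  intro d₁ d₂
  obtain ⟨p⟩ := hconn.preconnected d₁.snd d₂.fst
  exact reach_of_walk hd hreg p d₁ d₂ rfl rfl
end

section
/- Let G be a graph with distinct vertices u ≠ v joined by an edge e, and let G_e be the contraction of G along e (discard e, identify u and v). Then λ_irred(G) ≤ λ_irred(G_e), where λ_irred(H) is the growth rate of the number of irreducible (non-backtracking) closed walks in H, i.e., the Perron value of H_irred. -/
open scoped Classical

/-- A multigraph, given by a vertex set, a set of darts (directed edges), an involution pairing
each dart with its reverse, and a tail map.  Parallel edges, whole-loops and half-loops are all
allowed. -/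
structure Multigraph where
  V : Type
  D : Type
  inv : D → D
  tl : D → V
  inv_invol : ∀ d, inv (inv d) = d

/-- The head of a dart: the tail of its reverse. -/
def Multigraph.hd (G : Multigraph) (d : G.D) : G.V := G.tl (G.inv d)

/-- The number of irreducible (non-backtracking) closed walks of length `k` in `G`:
lists of `k` consecutively-composable darts with no step immediately followed by its reverse,
whose first tail equals the last head. -/
noncomputable def Multigraph.cWalks (G : Multigraph) (k : ℕ) : ℕ :=
  Nat.card {l : List G.D // l.length = k ∧
    List.Chain' (fun a b => G.tl b = G.hd a ∧ b ≠ G.inv a) l ∧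
    ∀ d₁ ∈ l.head?, ∀ d₂ ∈ l.getLast?, G.tl d₁ = G.hd d₂}

/-- `λ_irred(G)`: the growth rate of the number of irreducible closed walks, i.e. the Perron
value of the non-backtracking dart graph `G_irred`. -/
noncomputable def Multigraph.lamIrred (G : Multigraph) : ℝ :=
  Filter.limsup (fun k : ℕ => (G.cWalks k : ℝ) ^ ((k : ℝ)⁻¹)) Filter.atTop

/-- The contraction of `G` along the (non-loop) edge `{e, inv e}`: the two darts of the edge are
discarded and the head of `e` is identified with its tail (every dart previously attached to
`hd e` is reattached to `tl e`; the vertex `hd e` becomes isolated). -/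
noncomputable def Multigraph.contract (G : Multigraph) (e : G.D) : Multigraph where
  V := G.V
  D := {d : G.D // d ≠ e ∧ d ≠ G.inv e}
  inv := fun d => ⟨G.inv d.1, by
    constructor
    · intro h
      exact d.2.2 ((G.inv_invol d.1).symm.trans (congrArg G.inv h))
    · intro h
      exact d.2.1 (by
        have := congrArg G.inv h
        rwa [G.inv_invol, G.inv_invol] at this)⟩
  tl := fun d => if G.tl d.1 = G.hd e then G.tl e else G.tl d.1
  inv_invol := fun d => Subtype.ext (G.inv_invol d.1)

namespace Stmt13

variable (G : Multigraph) (e : G.D)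

/-- the step relation in `G` -/
abbrev P (a b : G.D) : Prop := G.tl b = G.hd a ∧ b ≠ G.inv a

/-- the step relation in `G.contract e` -/
abbrev Q (a b : (G.contract e).D) : Prop :=
  (G.contract e).tl b = (G.contract e).hd a ∧ b ≠ (G.contract e).inv a

/-- special darts: the two darts of the contracted edge -/
abbrev spec (d : G.D) : Prop := d = e ∨ d = G.inv e

noncomputable def f (d : G.D) : Option ((G.contract e).D) :=
  if h : d ≠ e ∧ d ≠ G.inv e then some ⟨d, h⟩ else none

noncomputable def red (l : List G.D) : List ((G.contract e).D) := l.filterMap (f G e)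

noncomputable def phi (w : G.V) : G.V := if w = G.hd e then G.tl e else w

variable {G e}

lemma hd_inv (d : G.D) : G.hd (G.inv d) = G.tl d := by
  unfold Multigraph.hd; rw [G.inv_invol]

lemma contract_tl (d : (G.contract e).D) : (G.contract e).tl d = phi G e (G.tl d.1) := rfl

lemma contract_hd (d : (G.contract e).D) : (G.contract e).hd d = phi G e (G.hd d.1) := by
  show (if G.tl (G.inv d.1) = G.hd e then G.tl e else G.tl (G.inv d.1)) = _
  rfl

lemma contract_inv (d : (G.contract e).D) : ((G.contract e).inv d).1 = G.inv d.1 := rfl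

lemma red_cons_spec {a : G.D} (ha : spec G e a) (t : List G.D) :
    red G e (a :: t) = red G e t := by
  unfold red f
  rw [List.filterMap_cons]
  have : ¬ (a ≠ e ∧ a ≠ G.inv e) := by
    rcases ha with h | h <;> simp [h]
  simp [this]

lemma red_cons_nonspec {a : G.D} (ha : ¬ spec G e a) (t : List G.D) :
    red G e (a :: t) = ⟨a, by unfold spec at ha; push_neg at ha; exact ha⟩ :: red G e t := by
  unfold red f
  rw [List.filterMap_cons]
  have h1 : a ≠ e ∧ a ≠ G.inv e := by unfold spec at ha; push_neg at ha; exact ha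
  simp [h1]

variable (huv : G.tl e ≠ G.hd e)

lemma tl_inv_e : G.tl (G.inv e) = G.hd e := rfl

lemma hd_inv_e : G.hd (G.inv e) = G.tl e := hd_inv e

include huv in
lemma spec_tl_ne_hd {a : G.D} (ha : spec G e a) : G.tl a ≠ G.hd a := by
  rcases ha with rfl | rfl
  · exact huv
  · rw [tl_inv_e, hd_inv_e]; exact fun h => huv h.symm

include huv in
lemma spec_tl_inj {a b : G.D} (ha : spec G e a) (hb : spec G e b) (h : G.tl a = G.tl b) :
    a = b := by
  rcases ha with rfl | rfl <;> rcases hb with rfl | rfl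
  · rfl
  · exfalso; rw [tl_inv_e] at h; exact huv h
  · exfalso; rw [tl_inv_e] at h; exact huv h.symm
  · rfl

include huv in
lemma spec_hd_inj {a b : G.D} (ha : spec G e a) (hb : spec G e b) (h : G.hd a = G.hd b) :
    a = b := by
  rcases ha with rfl | rfl <;> rcases hb with rfl | rfl
  · rfl
  · exfalso; rw [hd_inv_e] at h; exact huv h.symm
  · exfalso; rw [hd_inv_e] at h; exact huv h
  · rfl

include huv in
lemma nonspec_after_spec {a b : G.D} (hab : P G a b) (ha : spec G e a) : ¬ spec G e b := by
  rintro (rfl | rfl)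
  · rcases ha with rfl | rfl
    · exact huv hab.1
    · exact hab.2 (by rw [G.inv_invol])
  · rcases ha with rfl | rfl
    · exact hab.2 rfl
    · exact huv (tl_inv_e.symm.trans (hab.1.trans hd_inv_e)).symm

lemma phi_tl_spec {a : G.D} (ha : spec G e a) : phi G e (G.tl a) = G.tl e := by
  rcases ha with rfl | rfl
  · unfold phi
    split <;> rfl
  · rw [tl_inv_e]; unfold phi; rw [if_pos rfl]

include huv in
lemma phi_hd_spec {a : G.D} (ha : spec G e a) : phi G e (G.hd a) = G.tl e := by
  rcases ha with rfl | rfl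
  · unfold phi; rw [if_pos rfl]
  · rw [hd_inv_e]; unfold phi; rw [if_neg huv]

@[simp] lemma red_nil : red G e [] = [] := rfl

include huv in
lemma red_chain : ∀ l : List G.D, l.Chain' (P G) →
    (red G e l).Chain' (Q G e) ∧
    (∀ b ∈ (red G e l).head?, ∀ a₀ ∈ l.head?,
        b.1 = a₀ ∨ (spec G e a₀ ∧ G.tl b.1 = G.hd a₀)) ∧
    (∀ b ∈ (red G e l).getLast?, ∀ a₀ ∈ l.getLast?,
        b.1 = a₀ ∨ (spec G e a₀ ∧ G.hd b.1 = G.tl a₀)) := by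
  intro l
  induction l with
  | nil => simp [List.Chain', List.isChain_nil]
  | cons a t ih =>
    intro hl
    obtain ⟨hQ, hhd, hlast⟩ := ih hl.tail
    by_cases ha : spec G e a
    · rw [red_cons_spec ha]
      cases t with
      | nil => simp [List.Chain', List.isChain_nil]
      | cons c t' =>
        have hac : P G a c := (List.isChain_cons_cons.1 hl).1
        have hc : ¬ spec G e c := nonspec_after_spec huv hac ha
        refine ⟨hQ, ?_, ?_⟩
        · intro b hb a₀ ha₀
          simp only [List.head?_cons, Option.mem_def, Option.some.injEq] at ha₀
          subst ha₀
          rw [red_cons_nonspec hc] at hb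
          simp only [List.head?_cons, Option.mem_def, Option.some.injEq] at hb
          obtain rfl := Option.some.inj hb
          exact Or.inr ⟨ha, hac.1⟩
        · intro b hb a₀ ha₀
          rw [List.getLast?_cons_cons] at ha₀
          exact hlast b hb a₀ ha₀
    · rw [red_cons_nonspec ha]
      have ha' : a ≠ e ∧ a ≠ G.inv e := not_or.1 ha
      refine ⟨?_, ?_, ?_⟩
      · refine List.isChain_cons.2 ?_
        refine ⟨?_, hQ⟩
        intro b hb
        cases t with
        | nil => simp at hb
        | cons c t' =>
          have hac : P G a c := (List.isChain_cons_cons.1 hl).1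
          have h4 := hhd b hb c (by simp)
          have htl : (G.contract e).tl b = (G.contract e).hd ⟨a, ha'⟩ := by
            rcases h4 with h | ⟨hsc, h⟩
            · rw [contract_tl, contract_hd (G := G) (e := e) ⟨a, ha'⟩, h, hac.1]
            · rw [contract_tl, contract_hd (G := G) (e := e) ⟨a, ha'⟩, h, phi_hd_spec huv hsc, ← phi_tl_spec (G := G) (e := e) hsc, hac.1]
          refine ⟨htl, ?_⟩
          intro hcon
          have hbval : b.1 = G.inv a := congrArg Subtype.val hcon
          rcases h4 with h | ⟨hsc, h⟩
          · exact hac.2 (by rw [← h, hbval])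
          · have h1 : G.tl b.1 = G.hd a := by rw [hbval]; rfl
            have h2 : G.hd c = G.tl c := by rw [hac.1, ← h1, h]
            exact spec_tl_ne_hd huv hsc h2.symm
      · intro b hb a₀ ha₀
        simp only [List.head?_cons, Option.mem_def, Option.some.injEq] at hb ha₀
        obtain rfl := Option.some.inj hb; subst ha₀
        exact Or.inl rfl
      · intro b hb a₀ ha₀
        cases t with
        | nil =>
          simp only [red_nil, List.getLast?_singleton, Option.mem_def, Option.some.injEq] at hb ha₀
          obtain rfl := Option.some.inj hb; subst ha₀
          exact Or.inl rfl
        | cons c t' =>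
          have hac : P G a c := (List.isChain_cons_cons.1 hl).1
          rw [List.getLast?_cons_cons] at ha₀
          rcases hr : red G e (c :: t') with _ | ⟨r₀, r'⟩
          · -- red (c :: t') = [] forces c spec and t' = []
            have hcs : spec G e c := by
              by_contra hc
              rw [red_cons_nonspec hc] at hr
              exact List.cons_ne_nil _ _ hr
            rw [red_cons_spec hcs] at hr
            cases t' with
            | cons d t'' =>
              have hcd : P G c d := (List.isChain_cons_cons.1 hl.tail).1
              have hd : ¬ spec G e d := nonspec_after_spec huv hcd hcs
              rw [red_cons_nonspec hd] at hr
              exact absurd hr (List.cons_ne_nil _ _)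
            | nil =>
              simp only [List.getLast?_singleton, Option.mem_def, Option.some.injEq] at ha₀
              subst ha₀
              rw [red_cons_spec hcs, red_nil] at hb
              simp only [List.getLast?_singleton, Option.mem_def, Option.some.injEq] at hb
              obtain rfl := Option.some.inj hb
              exact Or.inr ⟨hcs, hac.1.symm⟩
          · -- red t nonempty
            have : (⟨a, ha'⟩ :: red G e (c :: t')).getLast? = (red G e (c :: t')).getLast? := by
              rw [hr]; rfl
            rw [this] at hb
            exact hlast b hb a₀ ha₀

include huv in
lemma red_len : ∀ l : List G.D, l.Chain' (P G) →
    l.length ≤ 2 * (red G e l).length + 1 ∧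
    (∀ a ∈ l.head?, ¬ spec G e a → l.length ≤ 2 * (red G e l).length) := by
  intro l
  induction l with
  | nil => simp
  | cons a t ih =>
    intro hl
    obtain ⟨ih1, ih2⟩ := ih hl.tail
    by_cases ha : spec G e a
    · rw [red_cons_spec ha]
      refine ⟨?_, ?_⟩
      · cases t with
        | nil => simp
        | cons c t' =>
          have hac : P G a c := (List.isChain_cons_cons.1 hl).1
          have hc : ¬ spec G e c := nonspec_after_spec huv hac ha
          have h2 := ih2 c (by simp) hc
          simp only [List.length_cons] at h2 ⊢
          omega
      · intro a₀ ha₀ hns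
        simp only [List.head?_cons, Option.mem_def, Option.some.injEq] at ha₀
        subst ha₀; exact absurd ha hns
    · have ha' : a ≠ e ∧ a ≠ G.inv e := not_or.1 ha
      rw [red_cons_nonspec ha]
      have hle : (a :: t).length ≤ 2 * ((⟨a, ha'⟩ : (G.contract e).D) :: red G e t).length := by
        show t.length + 1 ≤ 2 * ((red G e t).length + 1)
        omega
      exact ⟨le_trans hle (Nat.le_succ _), fun _ _ _ => hle⟩

include huv in
lemma spec_mismatch {a b : G.D} {t₁ t₂ : List G.D} (h1 : (a :: t₁).Chain' (P G))
    (hr : red G e (a :: t₁) = red G e (b :: t₂)) (htl : G.tl a = G.tl b)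
    (ha : spec G e a) (hb : ¬ spec G e b) : False := by
  rw [red_cons_spec ha, red_cons_nonspec hb] at hr
  cases t₁ with
  | nil => simp at hr
  | cons c t₁' =>
    have hac : P G a c := (List.isChain_cons_cons.1 h1).1
    have hc : ¬ spec G e c := nonspec_after_spec huv hac ha
    rw [red_cons_nonspec hc] at hr
    injection hr with h _
    have hcb : c = b := congrArg Subtype.val h
    exact spec_tl_ne_hd huv ha (htl.trans ((hcb ▸ hac.1 : G.tl b = G.hd a)))

include huv in
lemma red_inj : ∀ l₁ l₂ : List G.D, l₁.Chain' (P G) → l₂.Chain' (P G) →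
    red G e l₁ = red G e l₂ → l₁.length = l₂.length →
    (∀ a ∈ l₁.head?, ∀ b ∈ l₂.head?, G.tl a = G.tl b) → l₁ = l₂ := by
  intro l₁
  induction l₁ with
  | nil =>
    intro l₂ _ _ _ hlen _
    exact (List.length_eq_zero_iff.1 hlen.symm).symm
  | cons a t₁ ih =>
    intro l₂ h1 h2 hr hlen hhd
    cases l₂ with
    | nil => simp at hlen
    | cons b t₂ =>
      have htl : G.tl a = G.tl b := hhd a (by simp) b (by simp)
      have hspec : spec G e a ↔ spec G e b := by
        constructor
        · intro ha; by_contra hb; exact spec_mismatch huv h1 hr htl ha hb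
        · intro hb; by_contra ha; exact spec_mismatch huv h2 hr.symm htl.symm hb ha
      have hab : a = b ∧ red G e t₁ = red G e t₂ := by
        by_cases ha : spec G e a
        · have hb := hspec.1 ha
          refine ⟨spec_tl_inj huv ha hb htl, ?_⟩
          rwa [red_cons_spec ha, red_cons_spec hb] at hr
        · have hb : ¬ spec G e b := fun h => ha (hspec.2 h)
          rw [red_cons_nonspec ha, red_cons_nonspec hb] at hr
          injection hr with h hrt
          exact ⟨congrArg Subtype.val h, hrt⟩
      obtain ⟨rfl, hrt⟩ := hab
      have hheads : ∀ c ∈ t₁.head?, ∀ d ∈ t₂.head?, G.tl c = G.tl d := by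
        intro c hc d hd
        rw [((List.isChain_cons.1 h1).1 c hc).1, ((List.isChain_cons.1 h2).1 d hd).1]
      rw [ih t₂ h1.tail h2.tail hrt (by simpa using hlen) hheads]

lemma finite_len {D : Type} [Finite D] (k : ℕ) (Qp : List D → Prop) :
    Finite {l : List D // l.length = k ∧ Qp l} := by
  have h : Finite {l : List D // l.length = k} := by
    refine Finite.of_injective (fun x => fun i : Fin k => x.1.get (Fin.cast x.2.symm i)) ?_
    intro x y h
    refine Subtype.ext (List.ext_get (x.2.trans y.2.symm) ?_)
    intro n h1 h2
    have := congrFun h ⟨n, x.2 ▸ h1⟩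
    simpa using this
  refine Finite.of_injective
    (fun x => (⟨x.1, x.2.1⟩ : {l : List D // l.length = k})) ?_
  intro x y h
  have := congrArg Subtype.val h
  exact Subtype.ext this

lemma card_len {D : Type} [Finite D] (k : ℕ) (Qp : List D → Prop) :
    Nat.card {l : List D // l.length = k ∧ Qp l} ≤ Nat.card D ^ k := by
  have : Nat.card {l : List D // l.length = k ∧ Qp l} ≤ Nat.card (Fin k → D) := by
    refine Nat.card_le_card_of_injective
      (fun x => fun i : Fin k => x.1.get (Fin.cast x.2.1.symm i)) ?_
    intro x y h
    refine Subtype.ext (List.ext_get (x.2.1.trans y.2.1.symm) ?_)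
    intro n h1 h2
    have := congrFun h ⟨n, x.2.1 ▸ h1⟩
    simpa using this
  simpa [Nat.card_fun] using this

include huv in
lemma head_cond {l₁ l₂ : List G.D} (h1 : l₁.Chain' (P G)) (h2 : l₂.Chain' (P G))
    (hcl1 : ∀ d₁ ∈ l₁.head?, ∀ d₂ ∈ l₁.getLast?, G.tl d₁ = G.hd d₂)
    (hcl2 : ∀ d₁ ∈ l₂.head?, ∀ d₂ ∈ l₂.getLast?, G.tl d₁ = G.hd d₂)
    (hred : red G e l₁ = red G e l₂)
    (hflag : l₁.head?.elim false (fun a => decide (spec G e a)) =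
      l₂.head?.elim false (fun a => decide (spec G e a))) :
    ∀ a ∈ l₁.head?, ∀ b ∈ l₂.head?, G.tl a = G.tl b := by
  intro a ha b hb
  cases l₁ with
  | nil => simp at ha
  | cons a₁ t₁ =>
    cases l₂ with
    | nil => simp at hb
    | cons b₁ t₂ =>
      simp only [List.head?_cons, Option.mem_def, Option.some.injEq] at ha hb
      subst ha; subst hb
      simp only [List.head?_cons, Option.elim_some] at hflag
      have hiff : spec G e a₁ ↔ spec G e b₁ := decide_eq_decide.1 hflag
      by_cases hsa : spec G e a₁
      · have hsb : spec G e b₁ := hiff.1 hsa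
        cases t₁ with
        | nil =>
          exact absurd (hcl1 a₁ (by simp) a₁ (by simp)) (spec_tl_ne_hd huv hsa)
        | cons c₁ t₁' =>
          cases t₂ with
          | nil =>
            exact absurd (hcl2 b₁ (by simp) b₁ (by simp)) (spec_tl_ne_hd huv hsb)
          | cons c₂ t₂' =>
            have hac : P G a₁ c₁ := (List.isChain_cons_cons.1 h1).1
            have hbc : P G b₁ c₂ := (List.isChain_cons_cons.1 h2).1
            have hc₁ : ¬ spec G e c₁ := nonspec_after_spec huv hac hsa
            have hc₂ : ¬ spec G e c₂ := nonspec_after_spec huv hbc hsb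
            rw [red_cons_spec hsa, red_cons_nonspec hc₁, red_cons_spec hsb,
              red_cons_nonspec hc₂] at hred
            injection hred with h _
            have hcc : c₁ = c₂ := congrArg Subtype.val h
            have : G.hd a₁ = G.hd b₁ := by rw [← hac.1, hcc, hbc.1]
            rw [spec_hd_inj huv hsa hsb this]
      · have hsb : ¬ spec G e b₁ := fun h => hsa (hiff.2 h)
        rw [red_cons_nonspec hsa, red_cons_nonspec hsb] at hred
        injection hred with h _
        exact congrArg G.tl (congrArg Subtype.val h : a₁ = b₁)

include huv in
lemma cWalks_le [Finite G.D] (k : ℕ) :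
    G.cWalks k ≤ 2 * ∑ m ∈ Finset.Icc (k / 2) k, (G.contract e).cWalks m := by
  classical
  haveI : Finite (G.contract e).D :=
    inferInstanceAs (Finite {d : G.D // d ≠ e ∧ d ≠ G.inv e})
  set W : ℕ → Type := fun m => {l : List (G.contract e).D // l.length = m ∧
    l.Chain' (Q G e) ∧
    ∀ d₁ ∈ l.head?, ∀ d₂ ∈ l.getLast?, (G.contract e).tl d₁ = (G.contract e).hd d₂} with hW
  haveI : ∀ m, Finite (W m) := fun m => finite_len m _
  set s := Finset.Icc (k / 2) k with hs
  have main : G.cWalks k ≤ Nat.card (Bool × Σ i : s, W i) := by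
    refine Nat.card_le_card_of_injective
      (fun x => (x.1.head?.elim false (fun a => decide (spec G e a)),
        ⟨⟨(red G e x.1).length, ?_⟩, ⟨red G e x.1, rfl, (red_chain huv x.1 x.2.2.1).1, ?_⟩⟩)) ?_
    · rw [hs, Finset.mem_Icc]
      have h1 := (red_len huv x.1 x.2.2.1).1
      have h2 := List.length_filterMap_le (f G e) x.1
      have h3 := x.2.1
      unfold red at *
      omega
    · -- closedness of the reduced walk
      intro b₁ hb₁ b₂ hb₂
      obtain ⟨l, hk, hc, hcl⟩ := x
      simp only at hb₁ hb₂ ⊢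
      have hlne : l ≠ [] := by
        rintro rfl
        simp at hb₁
      obtain ⟨a₀, ha₀⟩ : ∃ a₀, l.head? = some a₀ := ⟨l.head hlne, List.head?_eq_head hlne⟩
      obtain ⟨c₀, hc₀⟩ : ∃ c₀, l.getLast? = some c₀ :=
        ⟨l.getLast hlne, List.getLast?_eq_getLast hlne⟩
      have h4 := (red_chain huv l hc).2.1 b₁ hb₁ a₀ ha₀
      have h5 := (red_chain huv l hc).2.2 b₂ hb₂ c₀ hc₀
      have hclosed : G.tl a₀ = G.hd c₀ := hcl a₀ ha₀ c₀ hc₀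
      have e1 : (G.contract e).tl b₁ = phi G e (G.tl a₀) := by
        rcases h4 with h | ⟨hsp, h⟩
        · rw [contract_tl, h]
        · rw [contract_tl, h, phi_hd_spec huv hsp, phi_tl_spec (G := G) (e := e) hsp]
      have e2 : (G.contract e).hd b₂ = phi G e (G.hd c₀) := by
        rcases h5 with h | ⟨hsp, h⟩
        · rw [contract_hd, h]
        · rw [contract_hd, h, phi_tl_spec (G := G) (e := e) hsp, phi_hd_spec huv hsp]
      rw [e1, e2, hclosed]
    · -- injectivity
      intro x y hxy
      have hflag := congrArg Prod.fst hxy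
      have hred : red G e x.1 = red G e y.1 :=
        congrArg (fun p : Bool × Σ i : s, W i => (p.2.2.1 : List (G.contract e).D)) hxy
      simp only at hflag hred
      exact Subtype.ext (red_inj huv x.1 y.1 x.2.2.1 y.2.2.1 hred
        (x.2.1.trans y.2.1.symm)
        (head_cond huv x.2.2.1 y.2.2.1 x.2.2.2 y.2.2.2 hred hflag))
  refine main.trans ?_
  letI : ∀ m : ℕ, Fintype (W m) := fun m => Fintype.ofFinite _
  have hWcard : ∀ m : ℕ, Fintype.card (W m) = (G.contract e).cWalks m := by
    intro m
    rw [← Nat.card_eq_fintype_card]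
    rfl
  have hsig : Nat.card (Σ i : s, W i) = ∑ m ∈ s, (G.contract e).cWalks m := by
    rw [Nat.card_eq_fintype_card, Fintype.card_sigma,
      ← Finset.sum_coe_sort s (fun m => (G.contract e).cWalks m)]
    exact Finset.sum_congr rfl (fun i _ => hWcard i)
  rw [Nat.card_prod, hsig, Nat.card_eq_fintype_card (α := Bool)]
  simp

lemma rpow_bound (c : ℕ → ℕ) (N : ℕ) (hc : ∀ m, c m ≤ N ^ m) :
    ∀ m : ℕ, (c m : ℝ) ^ ((m:ℝ)⁻¹) ≤ max (N:ℝ) 1 := by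
  intro m
  match m with
  | 0 => simp
  | (m+1) =>
    have h1 : (c (m+1) : ℝ) ≤ ((N:ℝ)) ^ (((m+1 : ℕ)) : ℝ) := by
      rw [Real.rpow_natCast]
      exact_mod_cast hc (m+1)
    have h2 := Real.rpow_le_rpow (Nat.cast_nonneg _) h1
      (by positivity : (0:ℝ) ≤ (((m+1:ℕ):ℝ))⁻¹)
    rw [← Real.rpow_mul (Nat.cast_nonneg _),
      mul_inv_cancel₀ (by exact_mod_cast Nat.succ_ne_zero m), Real.rpow_one] at h2
    exact le_trans h2 (le_max_left _ _)

open Filter in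
lemma analytic (a c : ℕ → ℕ) (N₁ N₂ : ℕ)
    (ha : ∀ k, a k ≤ N₁ ^ k)
    (hc : ∀ m, c m ≤ N₂ ^ m)
    (hmain : ∀ k, a k ≤ 2 * ∑ m ∈ Finset.Icc (k / 2) k, c m) :
    Filter.limsup (fun k : ℕ => (a k : ℝ) ^ ((k : ℝ)⁻¹)) Filter.atTop ≤
    Filter.limsup (fun m : ℕ => (c m : ℝ) ^ ((m : ℝ)⁻¹)) Filter.atTop := by
  set t := fun m : ℕ => (c m : ℝ) ^ ((m : ℝ)⁻¹) with ht
  set s := fun k : ℕ => (a k : ℝ) ^ ((k : ℝ)⁻¹) with hs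
  have hs0 : ∀ k, 0 ≤ s k := fun k => Real.rpow_nonneg (Nat.cast_nonneg _) _
  have ht0 : ∀ m, 0 ≤ t m := fun m => Real.rpow_nonneg (Nat.cast_nonneg _) _
  have hscob : Filter.IsCoboundedUnder (· ≤ ·) Filter.atTop s :=
    Filter.isCoboundedUnder_le_of_eventually_le _
      (Filter.Eventually.of_forall hs0)
  have htb : Filter.IsBoundedUnder (· ≤ ·) Filter.atTop t :=
    ⟨max (N₂ : ℝ) 1, Filter.eventually_map.2
      (Filter.Eventually.of_forall (rpow_bound c N₂ hc))⟩
  set L := Filter.limsup t Filter.atTop with hL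
  have hL0 : 0 ≤ L := Filter.le_limsup_of_frequently_le
    ((Filter.Eventually.of_forall ht0).frequently) htb
  refine le_of_forall_pos_le_add ?_
  intro ε hε
  set q := L + ε with hq
  have hq0 : (0:ℝ) < q := by rw [hq]; linarith
  have hev : ∀ᶠ m in Filter.atTop, t m < q :=
    Filter.eventually_lt_of_limsup_lt (by rw [hq, ← hL]; linarith) htb
  obtain ⟨M, hM⟩ := Filter.eventually_atTop.1 hev
  have hckey : ∀ m, M ≤ m → 1 ≤ m → (c m : ℝ) ≤ q ^ ((m:ℕ):ℝ) := by
    intro m h1 h2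
    have h3 := Real.rpow_le_rpow (ht0 m) (le_of_lt (hM m h1)) (Nat.cast_nonneg m)
    rw [ht] at h3
    rw [← Real.rpow_mul (Nat.cast_nonneg _),
      inv_mul_cancel₀ (by exact_mod_cast Nat.one_le_iff_ne_zero.1 h2 : ((m:ℕ):ℝ) ≠ 0),
      Real.rpow_one] at h3
    exact h3
  rcases le_or_gt 1 q with hq1 | hq1
  · -- growth rate at least 1
    set g := fun k : ℕ => (2*((k:ℝ)+1)) ^ ((k:ℝ)⁻¹) with hg
    have hgt : Filter.Tendsto g Filter.atTop (nhds 1) := by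
      have h1 : Filter.Tendsto (fun k : ℕ => (k:ℝ) ^ ((k:ℝ)⁻¹)) Filter.atTop (nhds 1) := by
        have := tendsto_rpow_div.comp (tendsto_natCast_atTop_atTop (R := ℝ))
        simpa [Function.comp_def, one_div] using this
      have hup : Filter.Tendsto (fun k : ℕ => ((k:ℝ) ^ ((k:ℝ)⁻¹))^2) Filter.atTop (nhds 1) := by
        simpa using h1.pow 2
      refine tendsto_of_tendsto_of_tendsto_of_le_of_le' tendsto_const_nhds hup ?_ ?_
      · filter_upwards [eventually_ge_atTop 1] with k hk
        have h2 : (1:ℝ) ≤ 2*((k:ℝ)+1) := by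
          have h3 : (0:ℝ) ≤ (k:ℝ) := Nat.cast_nonneg k
          linarith
        calc (1:ℝ) = 1 ^ ((k:ℝ)⁻¹) := (Real.one_rpow _).symm
          _ ≤ g k := Real.rpow_le_rpow zero_le_one h2 (by positivity)
      · filter_upwards [eventually_ge_atTop 3] with k hk
        have hk0 : (0:ℝ) ≤ (k:ℝ) := Nat.cast_nonneg k
        have hlen : 2*(k+1) ≤ k^2 := by nlinarith
        have hle : 2*((k:ℝ)+1) ≤ (k:ℝ)^2 := by exact_mod_cast hlen
        calc g k ≤ ((k:ℝ)^2) ^ ((k:ℝ)⁻¹) := Real.rpow_le_rpow (by positivity) hle (by positivity)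
          _ = ((k:ℝ) ^ ((k:ℝ)⁻¹))^2 := by
              rw [← Real.rpow_natCast ((k:ℝ) ^ ((k:ℝ)⁻¹)) 2, ← Real.rpow_mul hk0,
                ← Real.rpow_natCast (k:ℝ) 2, ← Real.rpow_mul hk0, mul_comm]
    have hr : Filter.Tendsto (fun k => g k * q) Filter.atTop (nhds q) := by
      simpa using hgt.mul_const q
    have hsr : ∀ᶠ k in Filter.atTop, s k ≤ g k * q := by
      filter_upwards [eventually_ge_atTop (2*M+2)] with k hk
      have hk1 : 1 ≤ k := by omega
      have hkr0 : ((k:ℕ):ℝ) ≠ 0 := by exact_mod_cast Nat.one_le_iff_ne_zero.1 hk1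
      have hsum : (a k : ℝ) ≤ 2*((k:ℝ)+1) * q ^ ((k:ℕ):ℝ) := by
        have step1 : (a k : ℝ) ≤ 2 * ∑ m ∈ Finset.Icc (k/2) k, (c m : ℝ) := by
          have := hmain k
          push_cast
          exact_mod_cast this
        have step2 : ∑ m ∈ Finset.Icc (k/2) k, (c m : ℝ) ≤
            ∑ m ∈ Finset.Icc (k/2) k, q ^ ((k:ℕ):ℝ) := by
          refine Finset.sum_le_sum ?_
          intro m hm
          rw [Finset.mem_Icc] at hm
          have h1 : M ≤ m := by omega
          have h2 : 1 ≤ m := by omega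
          refine le_trans (hckey m h1 h2) ?_
          exact Real.rpow_le_rpow_of_exponent_le hq1 (by exact_mod_cast hm.2)
        have step3 : ∑ m ∈ Finset.Icc (k/2) k, q ^ ((k:ℕ):ℝ) ≤ ((k:ℝ)+1) * q ^ ((k:ℕ):ℝ) := by
          rw [Finset.sum_const, nsmul_eq_mul]
          have hcard : (((Finset.Icc (k/2) k).card : ℕ) : ℝ) ≤ (k:ℝ)+1 := by
            rw [Nat.card_Icc]
            have : k + 1 - k/2 ≤ k + 1 := by omega
            exact_mod_cast this
          exact mul_le_mul_of_nonneg_right hcard (Real.rpow_nonneg hq0.le _)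
        calc (a k : ℝ) ≤ 2 * ∑ m ∈ Finset.Icc (k/2) k, (c m : ℝ) := step1
          _ ≤ 2 * (((k:ℝ)+1) * q ^ ((k:ℕ):ℝ)) := by
              refine mul_le_mul_of_nonneg_left (le_trans step2 step3) (by norm_num)
          _ = 2*((k:ℝ)+1) * q ^ ((k:ℕ):ℝ) := by ring
      have h4 := Real.rpow_le_rpow (Nat.cast_nonneg _) hsum
        (by positivity : (0:ℝ) ≤ ((k:ℝ))⁻¹)
      rw [Real.mul_rpow (by positivity) (Real.rpow_nonneg hq0.le _),
        ← Real.rpow_mul hq0.le, mul_inv_cancel₀ hkr0, Real.rpow_one] at h4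
      exact h4
    calc Filter.limsup s Filter.atTop ≤ Filter.limsup (fun k => g k * q) Filter.atTop :=
        Filter.limsup_le_limsup hsr hscob hr.isBoundedUnder_le
      _ = q := hr.limsup_eq
  · -- growth rate below 1: the counts vanish eventually
    have hzero : ∀ᶠ k in Filter.atTop, s k ≤ 0 := by
      filter_upwards [eventually_ge_atTop (2*M+2)] with k hk
      have hak : a k = 0 := by
        have h0 : ∀ m ∈ Finset.Icc (k/2) k, c m = 0 := by
          intro m hm
          rw [Finset.mem_Icc] at hm
          have h1 : M ≤ m := by omega
          have h2 : 1 ≤ m := by omega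
          have h3 := hckey m h1 h2
          have hlt : (c m : ℝ) < 1 := by
            refine lt_of_le_of_lt h3 ?_
            exact Real.rpow_lt_one hq0.le hq1 (by positivity)
          have : c m < 1 := by exact_mod_cast hlt
          omega
        have := hmain k
        rw [Finset.sum_eq_zero h0] at this
        omega
      have hk1 : 1 ≤ k := by omega
      rw [hs]
      simp only [hak, Nat.cast_zero]
      rw [Real.zero_rpow (by
        have : ((k:ℕ):ℝ) ≠ 0 := by exact_mod_cast Nat.one_le_iff_ne_zero.1 hk1
        exact inv_ne_zero this)]
    have : Filter.limsup s Filter.atTop ≤ 0 := Filter.limsup_le_of_le hscob hzero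
    linarith

end Stmt13

/-- Let `G` be a (finite) multigraph with an edge `e` joining two distinct
vertices `u ≠ v`, and let `G_e` be the contraction of `G` along `e`.  Then
`λ_irred(G) ≤ λ_irred(G_e)`. -/
theorem stmt13 (G : Multigraph) [Finite G.D] (e : G.D) (huv : G.tl e ≠ G.hd e) :
    G.lamIrred ≤ (G.contract e).lamIrred := by
  classical
  haveI : Finite (G.contract e).D :=
    inferInstanceAs (Finite {d : G.D // d ≠ e ∧ d ≠ G.inv e})
  unfold Multigraph.lamIrred
  refine Stmt13.analytic (G.cWalks) ((G.contract e).cWalks)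
    (Nat.card G.D) (Nat.card (G.contract e).D) ?_ ?_ (fun k => Stmt13.cWalks_le huv k)
  · intro k
    exact Stmt13.card_len k _
  · intro m
    exact Stmt13.card_len m _
end

section
/- Let s ≥ 1 and let g be a polynomial of degree ≤ s−1 with real coefficients such that |g(i)| ≤ 1 for all integers i with a ≤ i ≤ b (integers a ≤ b). Then |g(i)| ≤ 2^s − 1 for all integers i with a − (b−a)/(s−1) ≤ i ≤ a. -/
open Polynomial Finset
open scoped fwdDiff

lemma fwdDiff_polyeval (h : ℝ) (g : Polynomial ℝ) :
    Δ_[h] (fun y => g.eval y) = fun y => (g.comp (X + C h) - g).eval y := by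
  funext y
  simp [fwdDiff, Polynomial.eval_comp]

lemma fwdDiff_iter_polyeval_zero (h : ℝ) (n : ℕ) (g : Polynomial ℝ) (hg : g.natDegree < n) :
    (Δ_[h])^[n] (fun y => g.eval y) = 0 := by
  induction n generalizing g with
  | zero => omega
  | succ n IH =>
    rw [Function.iterate_succ_apply, fwdDiff_polyeval]
    set g₁ := g.comp (X + C h) - g with hg₁
    rcases eq_or_ne g.natDegree 0 with h0 | h0
    · have hC : g = C (g.coeff 0) := Polynomial.eq_C_of_natDegree_eq_zero h0
      have : g₁ = 0 := by rw [hg₁, hC]; simp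
      rw [this]
      have h2 : ((0:ℝ) • (fun y => Polynomial.eval y (0:ℝ[X])) : ℝ → ℝ)
          = (fun y => Polynomial.eval y (0:ℝ[X])) := by
        funext y; simp
      rw [← h2, fwdDiff_iter_const_smul]
      simp
    · apply IH
      have hgne : g ≠ 0 := fun hc => h0 (by simp [hc])
      have hlt : g₁.natDegree < g.natDegree := by
        by_cases hz : g₁ = 0
        · rw [hz]; simpa using Nat.pos_of_ne_zero h0
        · have hlc : (g.comp (X + C h)).leadingCoeff = g.leadingCoeff := by
            rw [Polynomial.leadingCoeff_comp (by simp)]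
            simp [Polynomial.leadingCoeff_X_add_C]
          have hcne : g.comp (X + C h) ≠ 0 := by
            intro hc
            apply hgne
            have := hlc
            rw [hc, Polynomial.leadingCoeff_zero] at this
            exact Polynomial.leadingCoeff_eq_zero.mp this.symm
          have hdeg : (g.comp (X + C h)).degree = g.degree := by
            rw [Polynomial.degree_eq_natDegree hcne, Polynomial.degree_eq_natDegree hgne,
              Polynomial.natDegree_comp]
            simp
          have := Polynomial.degree_sub_lt hdeg hcne hlc
          rw [hdeg, Polynomial.degree_eq_natDegree hgne, ← hg₁] at this
          exact (Polynomial.natDegree_lt_iff_degree_lt hz).mpr this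
      omega

/-- Let `s ≥ 1` and let `g` be a real polynomial of degree `≤ s−1` with
`|g(i)| ≤ 1` for all integers `i` with `a ≤ i ≤ b` (integers `a ≤ b`).  Then
`|g(i)| ≤ 2^s − 1` for all integers `i` with `a − (b−a)/(s−1) ≤ i ≤ a`. -/
theorem stmt18 (s : ℕ) (hs : 1 ≤ s) (g : Polynomial ℝ) (hdeg : g.natDegree ≤ s - 1)
    (a b : ℤ) (hab : a ≤ b)
    (hbound : ∀ i : ℤ, a ≤ i → i ≤ b → |g.eval (i : ℝ)| ≤ 1) :
    ∀ i : ℤ, (a : ℝ) - ((b : ℝ) - (a : ℝ)) / ((s : ℝ) - 1) ≤ (i : ℝ) → i ≤ a →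
      |g.eval (i : ℝ)| ≤ 2 ^ s - 1 := by
  intro i hlo hhi
  have hai : (0:ℤ) ≤ a - i := by omega
  have key : ((s:ℤ) - 1) * (a - i) ≤ b - a := by
    rcases eq_or_lt_of_le hs with h1 | h1
    · have hs1 : (s:ℤ) = 1 := by exact_mod_cast h1.symm
      rw [hs1]
      simp
      omega
    · have hpos : (0:ℝ) < (s:ℝ) - 1 := by
        have : (2:ℝ) ≤ (s:ℝ) := by exact_mod_cast h1
        linarith
      have h2 : ((a:ℝ) - (i:ℝ)) * ((s:ℝ) - 1) ≤ (b:ℝ) - (a:ℝ) := by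
        have h3 : (a:ℝ) - (i:ℝ) ≤ ((b:ℝ) - (a:ℝ)) / ((s:ℝ) - 1) := by linarith
        exact (le_div_iff₀ hpos).mp h3
      have h4 : (((s:ℤ) - 1) * (a - i) : ℝ) ≤ ((b - a : ℤ) : ℝ) := by
        push_cast
        nlinarith [h2]
      exact_mod_cast h4
  have hdg : g.natDegree < s := by omega
  set h : ℝ := (a:ℝ) - (i:ℝ) with hh
  have hz := congrFun (fwdDiff_iter_polyeval_zero h s g hdg) (i:ℝ)
  rw [fwdDiff_iter_eq_sum_shift] at hz
  rw [Finset.sum_range_succ'] at hz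
  simp only [Nat.sub_zero, Nat.choose_zero_right, Nat.cast_one, mul_one, zero_smul, add_zero,
    Pi.zero_apply, zsmul_eq_mul] at hz
  -- each shifted point is bounded by 1
  have hpt : ∀ k ∈ Finset.range s, |g.eval ((i:ℝ) + (k+1) • h)| ≤ 1 := by
    intro k hk
    have hks : k < s := Finset.mem_range.mp hk
    set j : ℤ := i + (k+1) * (a - i) with hj
    have hcast : ((j:ℤ):ℝ) = (i:ℝ) + (k+1) • h := by
      rw [hj, hh]
      push_cast [nsmul_eq_mul]
      ring
    rw [← hcast]
    apply hbound
    · have h7 : (a - i : ℤ) ≤ ((k:ℤ)+1) * (a - i) :=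
        le_mul_of_one_le_left hai (by omega)
      rw [hj]
      linarith
    · have hk1 : ((k:ℤ) + 1) ≤ (s:ℤ) := by exact_mod_cast hks
      have h5 : ((k:ℤ)+1) * (a - i) ≤ ((s:ℤ)) * (a - i) := mul_le_mul_of_nonneg_right hk1 hai
      have h6 : ((s:ℤ)) * (a-i) = ((s:ℤ)-1)*(a-i) + (a-i) := by ring
      rw [hj]
      linarith [key, h5, h6]
  -- |g(i)| = |sum|
  have hmain : |g.eval (i:ℝ)| = |∑ k ∈ Finset.range s,
      (((-1:ℤ) ^ (s - (k+1)) * (s.choose (k+1)) : ℤ) : ℝ) * g.eval ((i:ℝ) + (k+1) • h)| := by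
    have hgi : ((-1:ℝ)^s) * g.eval (i:ℝ) = -∑ k ∈ Finset.range s,
        (((-1:ℤ) ^ (s - (k+1)) * (s.choose (k+1)) : ℤ) : ℝ) * g.eval ((i:ℝ) + (k+1) • h) := by
      push_cast at hz ⊢
      linarith [hz]
    have : |((-1:ℝ)^s) * g.eval (i:ℝ)| = |g.eval (i:ℝ)| := by
      rw [abs_mul, abs_pow, abs_neg, abs_one, one_pow, one_mul]
    rw [← this, hgi, abs_neg]
  rw [hmain]
  calc |∑ k ∈ Finset.range s,
      (((-1:ℤ) ^ (s - (k+1)) * (s.choose (k+1)) : ℤ) : ℝ) * g.eval ((i:ℝ) + (k+1) • h)|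
      ≤ ∑ k ∈ Finset.range s,
        |(((-1:ℤ) ^ (s - (k+1)) * (s.choose (k+1)) : ℤ) : ℝ) * g.eval ((i:ℝ) + (k+1) • h)| :=
      Finset.abs_sum_le_sum_abs _ _
    _ ≤ ∑ k ∈ Finset.range s, (s.choose (k+1) : ℝ) := by
      apply Finset.sum_le_sum
      intro k hk
      rw [abs_mul]
      have h6 : |(((-1:ℤ) ^ (s - (k+1)) * (s.choose (k+1)) : ℤ) : ℝ)| = (s.choose (k+1) : ℝ) := by
        push_cast
        rw [abs_mul, abs_pow, abs_neg, abs_one, one_pow, one_mul, Nat.abs_cast]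
      rw [h6]
      calc (s.choose (k+1) : ℝ) * |g.eval ((i:ℝ) + (k+1) • h)|
          ≤ (s.choose (k+1) : ℝ) * 1 := by
            exact mul_le_mul_of_nonneg_left (hpt k hk) (by positivity)
        _ = (s.choose (k+1) : ℝ) := mul_one _
    _ = 2 ^ s - 1 := by
      have hn : (∑ k ∈ Finset.range s, s.choose (k+1)) + 1 = 2 ^ s := by
        have := Nat.sum_range_choose s
        rw [Finset.sum_range_succ'] at this
        simpa using this
      have : ((∑ k ∈ Finset.range s, s.choose (k+1) : ℕ) : ℝ) + 1 = 2 ^ s := by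
        exact_mod_cast congrArg (Nat.cast : ℕ → ℝ) hn
      push_cast at this
      linarith
end

section
/- Let f₁, f₂ : ℕ₊ → ℝ be d-Ramanujan of order α with 1 ≤ α < d−1, i.e., f_i(k) = (d−1)^k p_i(k) + e_i(k) with p_i polynomials and |e_i(k)| ≤ c k^c α^k. Then the convolution g(k) = Σ_{j=1}^{k−1} f₁(j) f₂(k−j) is also d-Ramanujan of order α: there exist a polynomial p and a constant c' with |g(k) − (d−1)^k p(k)| ≤ c' k^{c'} α^k for all k. -/
set_option maxHeartbeats 1000000

open Finset Polynomial


lemma abs_tsum_le' (f : ℕ → ℝ) (h : Summable fun m => |f m|) : |∑' m, f m| ≤ ∑' m, |f m| := by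
  have h' : Summable fun m => ‖f m‖ := h
  calc |∑' m, f m| = ‖∑' m, f m‖ := (Real.norm_eq_abs _).symm
    _ ≤ ∑' m, ‖f m‖ := norm_tsum_le_tsum_norm h'
    _ = ∑' m, |f m| := rfl


lemma sum_geo {β : ℝ} (hβ0 : 0 ≤ β) (hβ1 : β < 1) (A : ℕ) :
    Summable (fun m : ℕ => (m:ℝ)^A * β^m) :=
  summable_pow_mul_geometric_of_norm_lt_one A (by rwa [Real.norm_eq_abs, abs_of_nonneg hβ0])

lemma shift_summable {β : ℝ} (hβ0 : 0 < β) (hβ1 : β < 1) (A : ℕ) :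
    Summable (fun m : ℕ => ((m:ℝ)+1)^A * β^m) := by
  have h2 : Summable (fun m : ℕ => ((m+1:ℕ):ℝ)^A * β^(m+1)) :=
    (summable_nat_add_iff 1).2 (sum_geo hβ0.le hβ1 A)
  have h3 := h2.mul_right β⁻¹
  refine h3.congr fun m => ?_
  push_cast
  field_simp [pow_succ]
  ring

lemma tail_est {β : ℝ} (hβ0 : 0 < β) (hβ1 : β < 1) {c : ℝ} (hc : 0 ≤ c) (A : ℕ) (v : ℕ → ℝ)
    (hv : ∀ m, |v m| ≤ c * (m:ℝ)^A * β^m) :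
    ∀ k : ℕ, 1 ≤ k → |∑' m : ℕ, v (m + k)|
      ≤ c * (∑' m : ℕ, ((m:ℝ)+1)^A * β^m) * (k:ℝ)^A * β^k := by
  intro k hk
  have hk1 : (1:ℝ) ≤ (k:ℝ) := by exact_mod_cast hk
  have hsb : Summable (fun m : ℕ => c * ((m:ℝ)^A * β^m)) := (sum_geo hβ0.le hβ1 A).mul_left c
  have habs : Summable fun m => |v m| :=
    Summable.of_nonneg_of_le (fun _ => abs_nonneg _)
      (fun m => by simpa [mul_assoc] using hv m) hsb
  have habs' : Summable fun m => |v (m+k)| := (summable_nat_add_iff k).2 habs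
  have hS : Summable (fun m : ℕ => (c * (k:ℝ)^A * β^k) * (((m:ℝ)+1)^A * β^m)) :=
    (shift_summable hβ0 hβ1 A).mul_left _
  calc |∑' m : ℕ, v (m + k)| ≤ ∑' m : ℕ, |v (m + k)| :=
        abs_tsum_le' _ habs'
    _ ≤ ∑' m : ℕ, (c * (k:ℝ)^A * β^k) * (((m:ℝ)+1)^A * β^m) := by
        refine Summable.tsum_le_tsum (fun m => ?_) habs' hS
        have h1 := hv (m + k)
        have h2 : ((m+k:ℕ):ℝ)^A ≤ ((k:ℝ)*((m:ℝ)+1))^A := by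
          refine pow_le_pow_left₀ (by positivity) ?_ A
          push_cast
          nlinarith [Nat.cast_nonneg (α := ℝ) m]
        have h3 : (0:ℝ) < β^m := pow_pos hβ0 m
        calc |v (m+k)| ≤ c * ((m+k:ℕ):ℝ)^A * β^(m+k) := h1
          _ ≤ c * ((k:ℝ)*((m:ℝ)+1))^A * β^(m+k) := by
              refine mul_le_mul_of_nonneg_right (mul_le_mul_of_nonneg_left h2 hc) (by positivity)
          _ = (c * (k:ℝ)^A * β^k) * (((m:ℝ)+1)^A * β^m) := by
              rw [mul_pow, pow_add]; ring
    _ = c * (∑' m : ℕ, ((m:ℝ)+1)^A * β^m) * (k:ℝ)^A * β^k := by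
        rw [tsum_mul_left]; ring

lemma faul (t : ℕ) : ∃ R : Polynomial ℝ, ∀ k : ℕ,
    ∑ j ∈ Finset.range k, (j : ℝ) ^ t = R.eval (k : ℝ) := by
  refine ⟨(∑ i ∈ range (t + 1),
      Polynomial.C (_root_.bernoulli i * ((t + 1).choose i) / (t + 1)) * X ^ (t + 1 - i)).map
      (algebraMap ℚ ℝ), fun k => ?_⟩
  have h := sum_range_pow k t
  have h2 := congrArg (Rat.cast : ℚ → ℝ) h
  push_cast at h2
  rw [h2, Polynomial.eval_map]
  rw [Polynomial.eval₂_finset_sum]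
  refine Finset.sum_congr rfl fun i _ => ?_
  simp [div_eq_mul_inv]; ring

lemma polysum (q : Polynomial ℝ) : ∃ R : Polynomial ℝ, ∀ k : ℕ,
    ∑ j ∈ Finset.range k, q.eval (j : ℝ) = R.eval (k : ℝ) := by
  induction q using Polynomial.induction_on' with
  | add p q hp hq =>
    obtain ⟨Rp, hRp⟩ := hp
    obtain ⟨Rq, hRq⟩ := hq
    exact ⟨Rp + Rq, fun k => by simp [Finset.sum_add_distrib, hRp k, hRq k]⟩
  | monomial n a =>
    obtain ⟨R, hR⟩ := faul n
    refine ⟨Polynomial.C a * R, fun k => ?_⟩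
    simp [← hR k, Finset.mul_sum]

lemma conv_poly (p₁ p₂ : Polynomial ℝ) : ∃ R : Polynomial ℝ, ∀ k : ℕ,
    ∑ j ∈ Finset.range k, p₁.eval (j : ℝ) * p₂.eval ((k : ℝ) - (j : ℝ)) = R.eval (k : ℝ) := by
  induction p₂ using Polynomial.induction_on' with
  | add p q hp hq =>
    obtain ⟨Rp, hRp⟩ := hp
    obtain ⟨Rq, hRq⟩ := hq
    refine ⟨Rp + Rq, fun k => ?_⟩
    simp only [Polynomial.eval_add, mul_add, Finset.sum_add_distrib, hRp k, hRq k]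
  | monomial n a =>
    have key : ∀ (k : ℕ) (j : ℕ), p₁.eval (j:ℝ) * (a * ((k:ℝ) - j) ^ n)
        = a * ∑ t ∈ range (n+1), ((k:ℝ))^t * ((p₁ * (-X)^(n-t)).eval (j:ℝ)) * (n.choose t) := by
      intro k j
      have h : ((k:ℝ) - j) ^ n = ∑ t ∈ range (n+1), (k:ℝ)^t * (-(j:ℝ))^(n-t) * (n.choose t) := by
        rw [sub_eq_add_neg]; exact add_pow _ _ n
      rw [h]
      simp only [Finset.mul_sum]
      refine Finset.sum_congr rfl fun t _ => ?_
      simp; ring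
    choose Rt hRt using fun t => polysum (p₁ * (-X)^(n - t))
    refine ⟨Polynomial.C a * ∑ t ∈ range (n+1), X^t * Rt t * Polynomial.C ((n.choose t : ℝ)), fun k => ?_⟩
    have step : ∑ j ∈ range k, p₁.eval (j:ℝ) * (Polynomial.monomial n a).eval ((k:ℝ) - j)
        = a * ∑ t ∈ range (n+1), ((k:ℝ))^t * (Rt t).eval (k:ℝ) * (n.choose t) := by
      calc ∑ j ∈ range k, p₁.eval (j:ℝ) * (Polynomial.monomial n a).eval ((k:ℝ) - j)
          = ∑ j ∈ range k, (a * ∑ t ∈ range (n+1), ((k:ℝ))^t * ((p₁ * (-X)^(n-t)).eval (j:ℝ)) * (n.choose t)) := by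
            refine Finset.sum_congr rfl fun j _ => ?_
            rw [← key k j, Polynomial.eval_monomial]
        _ = a * ∑ t ∈ range (n+1), ((k:ℝ))^t * (∑ j ∈ range k, (p₁ * (-X)^(n-t)).eval (j:ℝ)) * (n.choose t) := by
            rw [← Finset.mul_sum, Finset.sum_comm]
            congr 1
            refine Finset.sum_congr rfl fun t _ => ?_
            rw [Finset.mul_sum, Finset.sum_mul]
        _ = a * ∑ t ∈ range (n+1), ((k:ℝ))^t * (Rt t).eval (k:ℝ) * (n.choose t) := by
            congr 1
            exact Finset.sum_congr rfl fun t _ => by rw [hRt t k]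
    rw [step]
    rw [Polynomial.eval_mul, Polynomial.eval_C, Polynomial.eval_finset_sum]
    congr 1
    refine Finset.sum_congr rfl fun t _ => ?_
    simp

lemma core {β : ℝ} (hβ0 : 0 < β) (hβ1 : β < 1) (w : ℕ → ℝ) (c : ℝ) (M : ℕ)
    (hw : ∀ m, |w m| ≤ c * (m:ℝ)^(M+1) * β^m) (n : ℕ) :
    ∃ (P : Polynomial ℝ) (C : ℝ) (N : ℕ), 0 < C ∧ ∀ k : ℕ, 1 ≤ k →
      |(∑ m ∈ Finset.range k, w m * ((k:ℝ) - m)^n) - P.eval (k:ℝ)| ≤ C * (k:ℝ)^N * β^k := by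
  have hc : 0 ≤ c := by
    have h := (abs_nonneg (w 1)).trans (hw 1)
    simp at h
    nlinarith
  set A := M + 1 + n with hA
  set v : ℕ → ℕ → ℝ := fun i m => w m * (-(m:ℝ))^(n-i) with hv
  have hw0 : w 0 = 0 := by
    have h := hw 0
    simp at h
    exact h
  have hvb : ∀ i m, |v i m| ≤ c * (m:ℝ)^A * β^m := by
    intro i m
    rcases Nat.eq_zero_or_pos m with rfl | hm
    · simp [hv, hw0]
      positivity
    · have hm1 : (1:ℝ) ≤ (m:ℝ) := by exact_mod_cast hm
      have : |v i m| = |w m| * (m:ℝ)^(n-i) := by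
        rw [hv]; simp [abs_mul, abs_pow, abs_of_nonneg (Nat.cast_nonneg (α := ℝ) m)]
      rw [this]
      calc |w m| * (m:ℝ)^(n-i) ≤ (c * (m:ℝ)^(M+1) * β^m) * (m:ℝ)^(n-i) := by
            refine mul_le_mul_of_nonneg_right (hw m) (by positivity)
        _ = c * (m:ℝ)^(M+1+(n-i)) * β^m := by rw [pow_add]; ring
        _ ≤ c * (m:ℝ)^A * β^m := by
            refine mul_le_mul_of_nonneg_right (mul_le_mul_of_nonneg_left ?_ hc) (by positivity)
            exact pow_le_pow_right₀ hm1 (by omega)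
  have hvsum : ∀ i, Summable fun m => |v i m| := by
    intro i
    refine Summable.of_nonneg_of_le (fun _ => abs_nonneg _) (hvb i)
      (by simpa [mul_assoc] using (sum_geo hβ0.le hβ1 A).mul_left c)
  set S := ∑' m : ℕ, ((m:ℝ)+1)^A * β^m with hS
  have hS0 : 0 ≤ S := tsum_nonneg (fun m => by positivity)
  refine ⟨∑ i ∈ range (n+1), Polynomial.C ((∑' m, v i m) * (n.choose i)) * X^i,
    2^n * (c+1) * (S+1), A + n, by positivity, fun k hk => ?_⟩
  have hk1 : (1:ℝ) ≤ (k:ℝ) := by exact_mod_cast hk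
  -- rewrite the finite sum
  have expand : ∑ m ∈ Finset.range k, w m * ((k:ℝ) - m)^n
      = ∑ i ∈ range (n+1), (∑ m ∈ range k, v i m) * (k:ℝ)^i * (n.choose i) := by
    have h1 : ∀ m, w m * ((k:ℝ) - m)^n
        = ∑ i ∈ range (n+1), v i m * (k:ℝ)^i * (n.choose i) := by
      intro m
      have h : ((k:ℝ) - m) ^ n = ∑ i ∈ range (n+1), (k:ℝ)^i * (-(m:ℝ))^(n-i) * (n.choose i) := by
        rw [sub_eq_add_neg]; exact add_pow _ _ n
      rw [h, Finset.mul_sum]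
      refine Finset.sum_congr rfl fun i _ => ?_
      simp only [hv]; ring
    rw [Finset.sum_congr rfl fun m _ => h1 m, Finset.sum_comm]
    refine Finset.sum_congr rfl fun i _ => ?_
    rw [Finset.sum_mul, Finset.sum_mul]
  have evalP : (∑ i ∈ range (n+1), Polynomial.C ((∑' m, v i m) * (n.choose i)) * X^i).eval (k:ℝ)
      = ∑ i ∈ range (n+1), (∑' m, v i m) * (k:ℝ)^i * (n.choose i) := by
    rw [Polynomial.eval_finset_sum]
    refine Finset.sum_congr rfl fun i _ => ?_
    simp; ring
  rw [expand, evalP, ← Finset.sum_sub_distrib]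
  have step : ∀ i ∈ range (n+1),
      |(∑ m ∈ range k, v i m) * (k:ℝ)^i * (n.choose i) - (∑' m, v i m) * (k:ℝ)^i * (n.choose i)|
      ≤ (n.choose i) * (c * (S+1) * (k:ℝ)^(A+n) * β^k) := by
    intro i hi
    have hi' : i ≤ n := by simpa [Nat.lt_succ_iff] using hi
    have hsum : Summable (v i) := (hvsum i).of_abs
    have htail := Summable.sum_add_tsum_nat_add k hsum
    have hdiff : (∑ m ∈ range k, v i m) - (∑' m, v i m) = -(∑' m, v i (m + k)) := by
      rw [← htail]; ring
    have htb := tail_est hβ0 hβ1 hc A (v i) (hvb i) k hk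
    calc |(∑ m ∈ range k, v i m) * (k:ℝ)^i * (n.choose i) - (∑' m, v i m) * (k:ℝ)^i * (n.choose i)|
        = |(∑ m ∈ range k, v i m) - (∑' m, v i m)| * (k:ℝ)^i * (n.choose i) := by
          rw [← sub_mul, ← sub_mul, abs_mul, abs_mul]
          simp [abs_of_nonneg, pow_nonneg (le_trans zero_le_one hk1)]
      _ = |∑' m, v i (m + k)| * (k:ℝ)^i * (n.choose i) := by rw [hdiff, abs_neg]
      _ ≤ (c * S * (k:ℝ)^A * β^k) * (k:ℝ)^n * (n.choose i) := by
          refine mul_le_mul_of_nonneg_right (mul_le_mul htb (pow_le_pow_right₀ hk1 hi')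
            (by positivity) (by positivity)) (by positivity)
      _ = (c*S) * ((k:ℝ)^A * (k:ℝ)^n * β^k * (n.choose i)) := by ring
      _ ≤ (c*(S+1)) * ((k:ℝ)^A * (k:ℝ)^n * β^k * (n.choose i)) := by
          refine mul_le_mul_of_nonneg_right (by nlinarith) (by positivity)
      _ = (n.choose i) * (c * (S+1) * (k:ℝ)^(A+n) * β^k) := by rw [pow_add]; ring
  calc |∑ i ∈ range (n+1), ((∑ m ∈ range k, v i m) * (k:ℝ)^i * (n.choose i) - (∑' m, v i m) * (k:ℝ)^i * (n.choose i))|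
      ≤ ∑ i ∈ range (n+1), |(∑ m ∈ range k, v i m) * (k:ℝ)^i * (n.choose i) - (∑' m, v i m) * (k:ℝ)^i * (n.choose i)| :=
        Finset.abs_sum_le_sum_abs _ _
    _ ≤ ∑ i ∈ range (n+1), (n.choose i) * (c * (S+1) * (k:ℝ)^(A+n) * β^k) :=
        Finset.sum_le_sum step
    _ = (∑ i ∈ range (n+1), (n.choose i : ℝ)) * (c * (S+1) * (k:ℝ)^(A+n) * β^k) := by
        rw [Finset.sum_mul]
    _ ≤ 2^n * (c+1) * (S+1) * (k:ℝ)^(A+n) * β^k := by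
        have hch : (∑ i ∈ range (n+1), (n.choose i : ℝ)) = 2^n := by
          exact_mod_cast congrArg (Nat.cast (R := ℝ)) (Nat.sum_range_choose n)
        rw [hch]
        have h1 : c * (S+1) ≤ (c+1) * (S+1) := by nlinarith
        have hT : (0:ℝ) ≤ (k:ℝ)^(A+n) * β^k := by positivity
        have h5 : c*(S+1) * ((k:ℝ)^(A+n) * β^k) ≤ (c+1)*(S+1) * ((k:ℝ)^(A+n)*β^k) :=
          mul_le_mul_of_nonneg_right h1 hT
        have h6 := mul_le_mul_of_nonneg_left h5 (pow_nonneg (zero_le_two (α := ℝ)) n)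
        calc (2:ℝ)^n * (c*(S+1)*(k:ℝ)^(A+n)*β^k) = 2^n * (c*(S+1)*((k:ℝ)^(A+n)*β^k)) := by ring
          _ ≤ 2^n * ((c+1)*(S+1)*((k:ℝ)^(A+n)*β^k)) := h6
          _ = 2^n*(c+1)*(S+1)*(k:ℝ)^(A+n)*β^k := by ring

def IsGood (β : ℝ) (F : ℕ → ℝ) : Prop :=
  ∃ (P : Polynomial ℝ) (C : ℝ) (N : ℕ), 0 < C ∧ ∀ k : ℕ, 1 ≤ k →
    |F k - P.eval (k:ℝ)| ≤ C * (k:ℝ)^N * β^k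

lemma isGood_congr {β : ℝ} {F G : ℕ → ℝ} (h : ∀ k : ℕ, 1 ≤ k → F k = G k) :
    IsGood β F → IsGood β G := by
  rintro ⟨P, C, N, hC, hb⟩
  exact ⟨P, C, N, hC, fun k hk => by rw [← h k hk]; exact hb k hk⟩

lemma isGood_add {β : ℝ} (hβ0 : 0 ≤ β) {F G : ℕ → ℝ} (hF : IsGood β F) (hG : IsGood β G) :
    IsGood β (fun k => F k + G k) := by
  obtain ⟨P, C₁, N₁, hC₁, hb₁⟩ := hF
  obtain ⟨Q, C₂, N₂, hC₂, hb₂⟩ := hG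
  refine ⟨P + Q, C₁ + C₂, max N₁ N₂, by positivity, fun k hk => ?_⟩
  have hk1 : (1:ℝ) ≤ (k:ℝ) := by exact_mod_cast hk
  have e1 : (k:ℝ)^N₁ ≤ (k:ℝ)^(max N₁ N₂) := pow_le_pow_right₀ hk1 (le_max_left _ _)
  have e2 : (k:ℝ)^N₂ ≤ (k:ℝ)^(max N₁ N₂) := pow_le_pow_right₀ hk1 (le_max_right _ _)
  have hb : (0:ℝ) ≤ β^k := by positivity
  calc |F k + G k - (P + Q).eval (k:ℝ)|
      = |(F k - P.eval (k:ℝ)) + (G k - Q.eval (k:ℝ))| := by rw [Polynomial.eval_add]; ring_nf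
    _ ≤ |F k - P.eval (k:ℝ)| + |G k - Q.eval (k:ℝ)| := abs_add_le _ _
    _ ≤ C₁ * (k:ℝ)^N₁ * β^k + C₂ * (k:ℝ)^N₂ * β^k := add_le_add (hb₁ k hk) (hb₂ k hk)
    _ ≤ (C₁ + C₂) * (k:ℝ)^(max N₁ N₂) * β^k := by
        have t1 : C₁ * (k:ℝ)^N₁ * β^k ≤ C₁ * (k:ℝ)^(max N₁ N₂) * β^k :=
          mul_le_mul_of_nonneg_right (mul_le_mul_of_nonneg_left e1 hC₁.le) hb
        have t2 : C₂ * (k:ℝ)^N₂ * β^k ≤ C₂ * (k:ℝ)^(max N₁ N₂) * β^k :=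
          mul_le_mul_of_nonneg_right (mul_le_mul_of_nonneg_left e2 hC₂.le) hb
        nlinarith
    _ = (C₁ + C₂) * (k:ℝ)^(max N₁ N₂) * β^k := rfl

lemma isGood_smul {β : ℝ} (hβ0 : 0 ≤ β) (a : ℝ) {F : ℕ → ℝ} (hF : IsGood β F) :
    IsGood β (fun k => a * F k) := by
  obtain ⟨P, C, N, hC, hb⟩ := hF
  refine ⟨Polynomial.C a * P, (|a| + 1) * C, N, by positivity, fun k hk => ?_⟩
  have h2 : |a * F k - (Polynomial.C a * P).eval (k:ℝ)| = |a| * |F k - P.eval (k:ℝ)| := by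
    rw [Polynomial.eval_mul, Polynomial.eval_C, ← abs_mul]
    ring_nf
  rw [h2]
  calc |a| * |F k - P.eval (k:ℝ)| ≤ |a| * (C * (k:ℝ)^N * β^k) :=
        mul_le_mul_of_nonneg_left (hb k hk) (abs_nonneg a)
    _ ≤ (|a| + 1) * C * (k:ℝ)^N * β^k := by
        have h3 : (0:ℝ) ≤ C * (k:ℝ)^N * β^k := by positivity
        nlinarith [abs_nonneg a]

lemma corePoly {β : ℝ} (hβ0 : 0 < β) (hβ1 : β < 1) (w : ℕ → ℝ) (c : ℝ) (M : ℕ)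
    (hw : ∀ m, |w m| ≤ c * (m:ℝ)^(M+1) * β^m) (p : Polynomial ℝ) :
    IsGood β (fun k => ∑ m ∈ Finset.range k, w m * p.eval ((k:ℝ) - m)) := by
  induction p using Polynomial.induction_on' with
  | add p q hp hq =>
    refine isGood_congr (fun k hk => ?_) (isGood_add hβ0.le hp hq)
    simp [mul_add, Finset.sum_add_distrib]
  | monomial n a =>
    have h := core hβ0 hβ1 w c M hw n
    have : IsGood β (fun k => ∑ m ∈ Finset.range k, w m * ((k:ℝ) - m)^n) := by
      obtain ⟨P, C, N, hC, hb⟩ := h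
      exact ⟨P, C, N, hC, hb⟩
    refine isGood_congr (fun k hk => ?_) (isGood_smul hβ0.le a this)
    rw [Finset.mul_sum]
    refine Finset.sum_congr rfl fun m _ => ?_
    rw [Polynomial.eval_monomial]
    ring


lemma Ebound {α c : ℝ} (hα1 : 1 ≤ α) (hc : 0 < c) {D : ℝ} (f : ℕ → ℝ) (p : Polynomial ℝ)
    (hb : ∀ k : ℕ, 1 ≤ k → |f k - D^k * p.eval (k:ℝ)| ≤ c * (k:ℝ)^c * α^k) :
    ∀ m : ℕ, |(if m = 0 then (0:ℝ) else f m - D^m * p.eval (m:ℝ))|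
      ≤ c * (m:ℝ)^(⌈c⌉₊+1) * α^m := by
  intro m
  rcases Nat.eq_zero_or_pos m with rfl | hm
  · simp
  · have hm1 : (1:ℝ) ≤ (m:ℝ) := by exact_mod_cast hm
    rw [if_neg (by omega)]
    refine (hb m hm).trans ?_
    have h1 : (m:ℝ)^c ≤ (m:ℝ)^((⌈c⌉₊+1 : ℕ) : ℕ) := by
      rw [← Real.rpow_natCast (m:ℝ) (⌈c⌉₊+1)]
      refine Real.rpow_le_rpow_of_exponent_le hm1 ?_
      push_cast
      have := Nat.le_ceil c
      linarith
    have hαk : (0:ℝ) ≤ α^m := by positivity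
    exact mul_le_mul_of_nonneg_right (mul_le_mul_of_nonneg_left h1 hc.le) hαk

/-- Fix `d > 2` and `1 ≤ α < d−1`.  If `f₁, f₂ : ℕ₊ → ℝ` are `d`-Ramanujan of
order `α`, i.e. `f_i(k) = (d−1)^k p_i(k) + e_i(k)` with `p_i` a polynomial and
`|e_i(k)| ≤ c k^c α^k`, then the convolution `g(k) = Σ_{j=1}^{k−1} f₁(j) f₂(k−j)` is also
`d`-Ramanujan of order `α`. -/
theorem stmt19 (d : ℕ) (hd : 2 < d) (α : ℝ) (hα1 : 1 ≤ α) (hα2 : α < (d : ℝ) - 1)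
    (f₁ f₂ : ℕ → ℝ)
    (h₁ : ∃ (p : Polynomial ℝ) (c : ℝ), 0 < c ∧ ∀ k : ℕ, 1 ≤ k →
      |f₁ k - ((d : ℝ) - 1) ^ k * p.eval (k : ℝ)| ≤ c * (k : ℝ) ^ c * α ^ k)
    (h₂ : ∃ (p : Polynomial ℝ) (c : ℝ), 0 < c ∧ ∀ k : ℕ, 1 ≤ k →
      |f₂ k - ((d : ℝ) - 1) ^ k * p.eval (k : ℝ)| ≤ c * (k : ℝ) ^ c * α ^ k) :
    ∃ (p : Polynomial ℝ) (c' : ℝ), 0 < c' ∧ ∀ k : ℕ, 1 ≤ k →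
      |(∑ j ∈ Finset.Ico 1 k, f₁ j * f₂ (k - j)) - ((d : ℝ) - 1) ^ k * p.eval (k : ℝ)|
        ≤ c' * (k : ℝ) ^ c' * α ^ k := by
  obtain ⟨p₁, c₁, hc₁, hb₁⟩ := h₁
  obtain ⟨p₂, c₂, hc₂, hb₂⟩ := h₂
  set D : ℝ := (d:ℝ) - 1 with hD
  have hd3 : (3:ℝ) ≤ (d:ℝ) := by exact_mod_cast hd
  have hD2 : (2:ℝ) ≤ D := by rw [hD]; linarith
  have hD0 : (0:ℝ) < D := by linarith
  have hα0 : (0:ℝ) < α := lt_of_lt_of_le one_pos hα1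
  set β : ℝ := α / D with hβ
  have hβ0 : 0 < β := div_pos hα0 hD0
  have hβ1 : β < 1 := (div_lt_one hD0).2 hα2
  have hDβ : ∀ k : ℕ, D^k * β^k = α^k := fun k => by
    rw [← mul_pow, hβ, mul_div_cancel₀ α hD0.ne']
  set M₁ : ℕ := ⌈c₁⌉₊ with hM₁
  set M₂ : ℕ := ⌈c₂⌉₊ with hM₂
  set E₁ : ℕ → ℝ := fun m => if m = 0 then 0 else f₁ m - D^m * p₁.eval (m:ℝ) with hE₁def
  set E₂ : ℕ → ℝ := fun m => if m = 0 then 0 else f₂ m - D^m * p₂.eval (m:ℝ) with hE₂def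
  have hE₁ : ∀ m, |E₁ m| ≤ c₁ * (m:ℝ)^(M₁+1) * α^m := Ebound hα1 hc₁ f₁ p₁ hb₁
  have hE₂ : ∀ m, |E₂ m| ≤ c₂ * (m:ℝ)^(M₂+1) * α^m := Ebound hα1 hc₂ f₂ p₂ hb₂
  have hE₁0 : E₁ 0 = 0 := by simp [hE₁def]
  have hE₂0 : E₂ 0 = 0 := by simp [hE₂def]
  have hw : ∀ (E : ℕ → ℝ) (c : ℝ) (M : ℕ), 0 < c → (∀ m, |E m| ≤ c * (m:ℝ)^(M+1) * α^m) →
      ∀ m, |(D⁻¹)^m * E m| ≤ c * (m:ℝ)^(M+1) * β^m := by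
    intro E c M hc hE m
    have h0 : (0:ℝ) < D⁻¹ := inv_pos.2 hD0
    calc |(D⁻¹)^m * E m| = (D⁻¹)^m * |E m| := by
          rw [abs_mul, abs_of_nonneg (by positivity)]
      _ ≤ (D⁻¹)^m * (c * (m:ℝ)^(M+1) * α^m) :=
          mul_le_mul_of_nonneg_left (hE m) (by positivity)
      _ = c * (m:ℝ)^(M+1) * β^m := by
          rw [hβ, div_eq_mul_inv α D, mul_pow]; ring
  obtain ⟨rC, CC, NC, hCC, hbC⟩ :=
    corePoly hβ0 hβ1 (fun j => (D⁻¹)^j * E₁ j) c₁ M₁ (hw E₁ c₁ M₁ hc₁ hE₁) p₂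
  obtain ⟨rB, CB, NB, hCB, hbB⟩ :=
    corePoly hβ0 hβ1 (fun m => (D⁻¹)^m * E₂ m) c₂ M₂ (hw E₂ c₂ M₂ hc₂ hE₂) p₁
  obtain ⟨RA, hRA⟩ := conv_poly p₁ p₂
  set Nn : ℕ := max NB (max NC (M₁+M₂+3)) with hNn
  set c' : ℝ := max (CB + CC + c₁*c₂ + 1) (Nn:ℝ) with hc'def
  have hc'pos : 0 < c' := lt_of_lt_of_le (by positivity) (le_max_left _ _)
  refine ⟨(RA - Polynomial.C (p₁.eval 0) * p₂) + rB + rC, c', hc'pos, fun k hk => ?_⟩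
  have hk1 : (1:ℝ) ≤ (k:ℝ) := by exact_mod_cast hk
  have hk0 : 0 < k := hk
  -- per-term expansion
  have ex : ∀ j ∈ Finset.Ico 1 k, f₁ j * f₂ (k - j)
      = D^k * (p₁.eval (j:ℝ) * p₂.eval ((k:ℝ) - j))
      + D^k * ((D⁻¹)^(k-j) * E₂ (k-j) * p₁.eval (j:ℝ))
      + D^k * ((D⁻¹)^j * E₁ j * p₂.eval ((k:ℝ) - j))
      + E₁ j * E₂ (k - j) := by
    intro j hj
    obtain ⟨hj1, hjk⟩ := Finset.mem_Ico.mp hj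
    have hjle : j ≤ k := le_of_lt hjk
    have hcast : ((k-j:ℕ):ℝ) = (k:ℝ) - j := by
      push_cast [hjle]; ring
    have hne1 : j ≠ 0 := by omega
    have hne2 : k - j ≠ 0 := by omega
    have hf₁ : f₁ j = D^j * p₁.eval (j:ℝ) + E₁ j := by
      simp only [hE₁def, if_neg hne1]; ring
    have hf₂ : f₂ (k-j) = D^(k-j) * p₂.eval ((k:ℝ) - j) + E₂ (k-j) := by
      simp only [hE₂def, if_neg hne2, hcast]; ring
    have e0 : D^j * D^(k-j) = D^k := by rw [← pow_add]; congr 1; omega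
    have e1 : D^j = D^k * (D⁻¹)^(k-j) := by
      rw [inv_pow]
      field_simp
      rw [← pow_add]; congr 1; omega
    have e2 : D^(k-j) = D^k * (D⁻¹)^j := by
      rw [inv_pow]
      field_simp
      rw [← pow_add]; congr 1; omega
    rw [hf₁, hf₂]
    linear_combination (p₁.eval (j:ℝ) * p₂.eval ((k:ℝ) - j)) * e0
      + (p₁.eval (j:ℝ) * E₂ (k-j)) * e1 + (E₁ j * p₂.eval ((k:ℝ) - j)) * e2
  have split : (∑ j ∈ Finset.Ico 1 k, f₁ j * f₂ (k - j))
      = D^k * (∑ j ∈ Finset.Ico 1 k, p₁.eval (j:ℝ) * p₂.eval ((k:ℝ) - j))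
      + D^k * (∑ j ∈ Finset.Ico 1 k, (D⁻¹)^(k-j) * E₂ (k-j) * p₁.eval (j:ℝ))
      + D^k * (∑ j ∈ Finset.Ico 1 k, (D⁻¹)^j * E₁ j * p₂.eval ((k:ℝ) - j))
      + ∑ j ∈ Finset.Ico 1 k, E₁ j * E₂ (k - j) := by
    rw [Finset.sum_congr rfl ex]
    rw [Finset.sum_add_distrib, Finset.sum_add_distrib, Finset.sum_add_distrib,
      ← Finset.mul_sum, ← Finset.mul_sum, ← Finset.mul_sum]
  -- part A
  have hA : (∑ j ∈ Finset.Ico 1 k, p₁.eval (j:ℝ) * p₂.eval ((k:ℝ) - j))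
      = RA.eval (k:ℝ) - p₁.eval 0 * p₂.eval (k:ℝ) := by
    have h0 : (∑ j ∈ Finset.range k, p₁.eval (j:ℝ) * p₂.eval ((k:ℝ) - j))
        = p₁.eval 0 * p₂.eval (k:ℝ) + ∑ j ∈ Finset.Ico 1 k, p₁.eval (j:ℝ) * p₂.eval ((k:ℝ) - j) := by
      rw [Finset.range_eq_Ico, Finset.sum_eq_sum_Ico_succ_bot hk0]
      simp
    linarith [h0, hRA k]
  -- part B : reindex
  have hB : (∑ j ∈ Finset.Ico 1 k, (D⁻¹)^(k-j) * E₂ (k-j) * p₁.eval (j:ℝ))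
      = ∑ m ∈ Finset.range k, (D⁻¹)^m * E₂ m * p₁.eval ((k:ℝ) - m) := by
    have h1 : (∑ j ∈ Finset.Ico 1 k, (D⁻¹)^(k-j) * E₂ (k-j) * p₁.eval (j:ℝ))
        = ∑ m ∈ Finset.Ico 1 k, (D⁻¹)^m * E₂ m * p₁.eval ((k:ℝ) - m) := by
      refine Finset.sum_nbij' (fun j => k - j) (fun m => k - m) ?_ ?_ ?_ ?_ ?_
      · intro a ha; obtain ⟨ha1, ha2⟩ := Finset.mem_Ico.mp ha
        show k - a ∈ Finset.Ico 1 k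
        exact Finset.mem_Ico.mpr ⟨by omega, by omega⟩
      · intro a ha; obtain ⟨ha1, ha2⟩ := Finset.mem_Ico.mp ha
        show k - a ∈ Finset.Ico 1 k
        exact Finset.mem_Ico.mpr ⟨by omega, by omega⟩
      · intro a ha; obtain ⟨ha1, ha2⟩ := Finset.mem_Ico.mp ha
        show k - (k - a) = a
        omega
      · intro a ha; obtain ⟨ha1, ha2⟩ := Finset.mem_Ico.mp ha
        show k - (k - a) = a
        omega
      · intro a ha; obtain ⟨ha1, ha2⟩ := Finset.mem_Ico.mp ha
        show (D⁻¹)^(k-a) * E₂ (k-a) * p₁.eval (a:ℝ)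
          = (D⁻¹)^(k-a) * E₂ (k-a) * p₁.eval ((k:ℝ) - ((k-a:ℕ):ℝ))
        congr 2
        push_cast [le_of_lt ha2]
        ring
    rw [h1, Finset.range_eq_Ico, Finset.sum_eq_sum_Ico_succ_bot hk0]
    simp [hE₂0]
  -- part C : add zero term
  have hC : (∑ j ∈ Finset.Ico 1 k, (D⁻¹)^j * E₁ j * p₂.eval ((k:ℝ) - j))
      = ∑ j ∈ Finset.range k, (D⁻¹)^j * E₁ j * p₂.eval ((k:ℝ) - j) := by
    rw [Finset.range_eq_Ico, Finset.sum_eq_sum_Ico_succ_bot hk0]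
    simp [hE₁0]
  -- assemble difference
  have evalp : ((RA - Polynomial.C (p₁.eval 0) * p₂) + rB + rC).eval (k:ℝ)
      = (RA.eval (k:ℝ) - p₁.eval 0 * p₂.eval (k:ℝ)) + rB.eval (k:ℝ) + rC.eval (k:ℝ) := by
    simp
  have diff : (∑ j ∈ Finset.Ico 1 k, f₁ j * f₂ (k - j))
      - D^k * ((RA - Polynomial.C (p₁.eval 0) * p₂) + rB + rC).eval (k:ℝ)
      = D^k * ((∑ m ∈ Finset.range k, ((D⁻¹)^m * E₂ m) * p₁.eval ((k:ℝ) - m)) - rB.eval (k:ℝ))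
      + D^k * ((∑ j ∈ Finset.range k, ((D⁻¹)^j * E₁ j) * p₂.eval ((k:ℝ) - j)) - rC.eval (k:ℝ))
      + ∑ j ∈ Finset.Ico 1 k, E₁ j * E₂ (k - j) := by
    rw [split, evalp, hA, hB, hC]
    ring
  -- bound each piece
  have hDk0 : (0:ℝ) < D^k := by positivity
  have bB := hbB k hk
  have bC := hbC k hk
  have bD : |∑ j ∈ Finset.Ico 1 k, E₁ j * E₂ (k - j)|
      ≤ c₁ * c₂ * (k:ℝ)^(M₁+M₂+3) * α^k := by
    have hterm : ∀ j ∈ Finset.Ico 1 k, |E₁ j * E₂ (k - j)|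
        ≤ c₁ * c₂ * (k:ℝ)^(M₁+1+(M₂+1)) * α^k := by
      intro j hj
      obtain ⟨hj1, hjk⟩ := Finset.mem_Ico.mp hj
      have hjle : (j:ℝ) ≤ (k:ℝ) := by exact_mod_cast le_of_lt hjk
      have hkjle : ((k-j:ℕ):ℝ) ≤ (k:ℝ) := by
        have : k - j ≤ k := by omega
        exact_mod_cast this
      have h1 : (j:ℝ)^(M₁+1) ≤ (k:ℝ)^(M₁+1) := pow_le_pow_left₀ (by positivity) hjle _
      have h2 : ((k-j:ℕ):ℝ)^(M₂+1) ≤ (k:ℝ)^(M₂+1) := pow_le_pow_left₀ (by positivity) hkjle _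
      have hαj : (0:ℝ) < α^j := by positivity
      have hαkj : (0:ℝ) < α^(k-j) := by positivity
      have hαsplit : α^j * α^(k-j) = α^k := by rw [← pow_add]; congr 1; omega
      calc |E₁ j * E₂ (k - j)| = |E₁ j| * |E₂ (k-j)| := abs_mul _ _
        _ ≤ (c₁ * (j:ℝ)^(M₁+1) * α^j) * (c₂ * ((k-j:ℕ):ℝ)^(M₂+1) * α^(k-j)) :=
            mul_le_mul (hE₁ j) (hE₂ (k-j)) (abs_nonneg _)
              (by positivity)
        _ ≤ (c₁ * (k:ℝ)^(M₁+1) * α^j) * (c₂ * (k:ℝ)^(M₂+1) * α^(k-j)) := by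
            have t1 := mul_le_mul_of_nonneg_right (mul_le_mul_of_nonneg_left h1 hc₁.le) hαj.le
            have t2 := mul_le_mul_of_nonneg_right (mul_le_mul_of_nonneg_left h2 hc₂.le) hαkj.le
            exact mul_le_mul t1 t2 (by positivity) (by positivity)
        _ = c₁ * c₂ * ((k:ℝ)^(M₁+1) * (k:ℝ)^(M₂+1)) * α^k := by rw [← hαsplit]; ring
        _ = c₁ * c₂ * (k:ℝ)^(M₁+1+(M₂+1)) * α^k := by rw [pow_add]; ring
    calc |∑ j ∈ Finset.Ico 1 k, E₁ j * E₂ (k - j)|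
        ≤ ∑ j ∈ Finset.Ico 1 k, |E₁ j * E₂ (k - j)| := Finset.abs_sum_le_sum_abs _ _
      _ ≤ ∑ j ∈ Finset.Ico 1 k, c₁ * c₂ * (k:ℝ)^(M₁+1+(M₂+1)) * α^k := Finset.sum_le_sum hterm
      _ = (k - 1 : ℕ) * (c₁ * c₂ * (k:ℝ)^(M₁+1+(M₂+1)) * α^k) := by
          rw [Finset.sum_const, Nat.card_Ico]
          simp [nsmul_eq_mul]
      _ ≤ (k:ℝ) * (c₁ * c₂ * (k:ℝ)^(M₁+1+(M₂+1)) * α^k) := by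
          refine mul_le_mul_of_nonneg_right ?_ (by positivity)
          exact_mod_cast Nat.sub_le k 1
      _ = c₁ * c₂ * ((k:ℝ) * (k:ℝ)^(M₁+1+(M₂+1))) * α^k := by ring
      _ = c₁ * c₂ * (k:ℝ)^(M₁+M₂+3) * α^k := by
          rw [show M₁+M₂+3 = (M₁+1+(M₂+1))+1 from by omega, pow_succ]
          ring
  -- final combination
  have hpm : ∀ N : ℕ, N ≤ Nn → (k:ℝ)^N ≤ (k:ℝ)^Nn := fun N hN => pow_le_pow_right₀ hk1 hN
  have key : |(∑ j ∈ Finset.Ico 1 k, f₁ j * f₂ (k - j))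
      - D^k * ((RA - Polynomial.C (p₁.eval 0) * p₂) + rB + rC).eval (k:ℝ)|
      ≤ (CB + CC + c₁*c₂) * (k:ℝ)^Nn * α^k := by
    rw [diff]
    have hBb : |D^k * ((∑ m ∈ Finset.range k, ((D⁻¹)^m * E₂ m) * p₁.eval ((k:ℝ) - m)) - rB.eval (k:ℝ))|
        ≤ CB * (k:ℝ)^Nn * α^k := by
      rw [abs_mul, abs_of_pos hDk0]
      calc D^k * |(∑ m ∈ Finset.range k, ((D⁻¹)^m * E₂ m) * p₁.eval ((k:ℝ) - m)) - rB.eval (k:ℝ)|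
          ≤ D^k * (CB * (k:ℝ)^NB * β^k) := mul_le_mul_of_nonneg_left bB hDk0.le
        _ ≤ D^k * (CB * (k:ℝ)^Nn * β^k) := by
            refine mul_le_mul_of_nonneg_left ?_ hDk0.le
            refine mul_le_mul_of_nonneg_right (mul_le_mul_of_nonneg_left
              (hpm NB (le_max_left _ _)) hCB.le) (by positivity)
        _ = CB * (k:ℝ)^Nn * (D^k * β^k) := by ring
        _ = CB * (k:ℝ)^Nn * α^k := by rw [hDβ k]
    have hCb : |D^k * ((∑ j ∈ Finset.range k, ((D⁻¹)^j * E₁ j) * p₂.eval ((k:ℝ) - j)) - rC.eval (k:ℝ))|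
        ≤ CC * (k:ℝ)^Nn * α^k := by
      rw [abs_mul, abs_of_pos hDk0]
      calc D^k * |(∑ j ∈ Finset.range k, ((D⁻¹)^j * E₁ j) * p₂.eval ((k:ℝ) - j)) - rC.eval (k:ℝ)|
          ≤ D^k * (CC * (k:ℝ)^NC * β^k) := mul_le_mul_of_nonneg_left bC hDk0.le
        _ ≤ D^k * (CC * (k:ℝ)^Nn * β^k) := by
            refine mul_le_mul_of_nonneg_left ?_ hDk0.le
            refine mul_le_mul_of_nonneg_right (mul_le_mul_of_nonneg_left
              (hpm NC (le_trans (le_max_left _ _) (le_max_right _ _))) hCC.le) (by positivity)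
        _ = CC * (k:ℝ)^Nn * (D^k * β^k) := by ring
        _ = CC * (k:ℝ)^Nn * α^k := by rw [hDβ k]
    have hDb : |∑ j ∈ Finset.Ico 1 k, E₁ j * E₂ (k - j)| ≤ c₁*c₂ * (k:ℝ)^Nn * α^k := by
      refine bD.trans ?_
      refine mul_le_mul_of_nonneg_right (mul_le_mul_of_nonneg_left
        (hpm (M₁+M₂+3) (le_trans (le_max_right _ _) (le_max_right _ _))) (by positivity)) (by positivity)
    calc |D^k * ((∑ m ∈ Finset.range k, ((D⁻¹)^m * E₂ m) * p₁.eval ((k:ℝ) - m)) - rB.eval (k:ℝ))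
        + D^k * ((∑ j ∈ Finset.range k, ((D⁻¹)^j * E₁ j) * p₂.eval ((k:ℝ) - j)) - rC.eval (k:ℝ))
        + ∑ j ∈ Finset.Ico 1 k, E₁ j * E₂ (k - j)|
        ≤ |D^k * ((∑ m ∈ Finset.range k, ((D⁻¹)^m * E₂ m) * p₁.eval ((k:ℝ) - m)) - rB.eval (k:ℝ))
          + D^k * ((∑ j ∈ Finset.range k, ((D⁻¹)^j * E₁ j) * p₂.eval ((k:ℝ) - j)) - rC.eval (k:ℝ))|
          + |∑ j ∈ Finset.Ico 1 k, E₁ j * E₂ (k - j)| := abs_add_le _ _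
      _ ≤ |D^k * ((∑ m ∈ Finset.range k, ((D⁻¹)^m * E₂ m) * p₁.eval ((k:ℝ) - m)) - rB.eval (k:ℝ))|
          + |D^k * ((∑ j ∈ Finset.range k, ((D⁻¹)^j * E₁ j) * p₂.eval ((k:ℝ) - j)) - rC.eval (k:ℝ))|
          + |∑ j ∈ Finset.Ico 1 k, E₁ j * E₂ (k - j)| := by
            have := abs_add_le (D^k * ((∑ m ∈ Finset.range k, ((D⁻¹)^m * E₂ m) * p₁.eval ((k:ℝ) - m)) - rB.eval (k:ℝ)))
              (D^k * ((∑ j ∈ Finset.range k, ((D⁻¹)^j * E₁ j) * p₂.eval ((k:ℝ) - j)) - rC.eval (k:ℝ)))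
            linarith
      _ ≤ CB * (k:ℝ)^Nn * α^k + CC * (k:ℝ)^Nn * α^k + c₁*c₂ * (k:ℝ)^Nn * α^k := by
            linarith
      _ = (CB + CC + c₁*c₂) * (k:ℝ)^Nn * α^k := by ring
  refine key.trans ?_
  have hαk : (0:ℝ) ≤ α^k := by positivity
  have step1 : (CB + CC + c₁*c₂) * (k:ℝ)^Nn * α^k ≤ c' * (k:ℝ)^Nn * α^k := by
    refine mul_le_mul_of_nonneg_right (mul_le_mul_of_nonneg_right ?_ (by positivity)) hαk
    calc CB + CC + c₁*c₂ ≤ CB + CC + c₁*c₂ + 1 := by linarith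
      _ ≤ c' := le_max_left _ _
  refine step1.trans ?_
  have step2 : (k:ℝ)^Nn ≤ (k:ℝ)^c' := by
    rw [← Real.rpow_natCast (k:ℝ) Nn]
    exact Real.rpow_le_rpow_of_exponent_le hk1 (le_max_right _ _)
  exact mul_le_mul_of_nonneg_right (mul_le_mul_of_nonneg_left step2 hc'pos.le) hαk
end
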